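/- arXiv:math-ph/0411018 — 6 statements merged into one kernel-verified Lean document; each statement's English description precedes it below -/
import Mathlib

section
/- For every phase-space point z ∈ ℝ^{2n}, let λ_1 ≥ λ_2 ≥ ⋯ ≥ λ_n be the eigenvalues of L(z) listed with multiplicity in decreasing order, and let λ̄_1 ≥ λ̄_2 ≥ ⋯ ≥ λ̄_n be those of L̄(z). Then λ_r > λ̄_r for every odd index r, and λ̄_r > λ_r for every even index r. Consequently, λ_r = λ_{r+1} is possible only when r is even, and λ̄_r = λ̄_{r+1} is possible only when r is odd. -/
open Matrix BigOperators

noncomputable def bfun {n : ℕ} [NeZero n] (z : (Fin n → ℝ) × (Fin n → ℝ)) (j : Fin n) : ℝ :=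
  Real.exp ((z.1 j - z.1 (j + 1)) / 2)

/-- The Lax matrix `L`. -/
noncomputable def Lax {n : ℕ} [NeZero n] (z : (Fin n → ℝ) × (Fin n → ℝ)) :
    Matrix (Fin n) (Fin n) ℝ := fun r s =>
  (if r = s then z.2 r else 0) + (if r + 1 = s then bfun z r else 0) +
    (if s + 1 = r then bfun z s else 0)

/-- The sign `σ_r`, equal to `-1` for the index corresponding to `b_n`. -/
noncomputable def sgn {n : ℕ} [NeZero n] (j : Fin n) : ℝ := if j + 1 = 0 then -1 else 1

/-- The Lax matrix `L̄` obtained from `L` by `b_n ↦ -b_n`. -/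
noncomputable def LaxBar {n : ℕ} [NeZero n] (z : (Fin n → ℝ) × (Fin n → ℝ)) :
    Matrix (Fin n) (Fin n) ℝ := fun r s =>
  (if r = s then z.2 r else 0) + (if r + 1 = s then sgn r * bfun z r else 0) +
    (if s + 1 = r then sgn s * bfun z s else 0)

/-- The canonical Poisson bracket on `ℝ^{2n}`. -/
noncomputable def pb {n : ℕ} (f g : (Fin n → ℝ) × (Fin n → ℝ) → ℝ)
    (z : (Fin n → ℝ) × (Fin n → ℝ)) : ℝ :=
  ∑ j : Fin n,
    (fderiv ℝ f z (Pi.single j 1, 0) * fderiv ℝ g z (0, Pi.single j 1) -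
     fderiv ℝ f z (0, Pi.single j 1) * fderiv ℝ g z (Pi.single j 1, 0))

/-- The integrals of motion `F_j = (1/j) Tr L^j`. -/
noncomputable def F {n : ℕ} [NeZero n] (j : ℕ) (z : (Fin n → ℝ) × (Fin n → ℝ)) : ℝ :=
  (1 / j : ℝ) * (Lax z ^ j).trace

/-- The map `F = (F_1, …, F_n) : ℝ^{2n} → ℝ^n`. -/
noncomputable def Fvec {n : ℕ} [NeZero n] (z : (Fin n → ℝ) × (Fin n → ℝ)) : Fin n → ℝ :=
  fun j => F (j.val + 1) z

/-- The corank of `dF(z)`. -/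
noncomputable def corank (n : ℕ) [NeZero n] (z : (Fin n → ℝ) × (Fin n → ℝ)) : ℕ :=
  n - Module.finrank ℝ (LinearMap.range (fderiv ℝ (Fvec (n := n)) z).toLinearMap)

/-- Number of (real) eigenvalues of `A` with two-dimensional eigenspace. -/
noncomputable def nuCount {n : ℕ} (A : Matrix (Fin n) (Fin n) ℝ) : ℕ :=
  {μ : ℝ | Module.finrank ℝ (LinearMap.ker (Matrix.toLin' (A - μ • 1))) = 2}.ncard



open Polynomial


-- Localized Rolle: toFinset version
theorem card_roots_toFinset_filter (p : ℝ[X]) (q : ℝ → Prop) [DecidablePred q]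
    (hq : ∀ ⦃x z y : ℝ⦄, q x → q y → x < z → z < y → q z) :
    (p.roots.toFinset.filter q).card ≤
      ((Polynomial.derivative p).roots.toFinset.filter q \ p.roots.toFinset.filter q).card + 1 := by
  rcases eq_or_ne (derivative p) 0 with hp' | hp'
  · rw [eq_C_of_derivative_eq_zero hp', roots_C]
    simp
  have hp : p ≠ 0 := ne_of_apply_ne derivative (by rwa [derivative_zero])
  refine Finset.card_le_diff_of_interleaved fun x hx y hy hxy hxy' => ?_
  simp only [Finset.mem_filter, Multiset.mem_toFinset, mem_roots hp] at hx hy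
  obtain ⟨z, hz1, hz2⟩ := exists_deriv_eq_zero hxy p.continuousOn (hx.1.trans hy.1.symm)
  refine ⟨z, Finset.mem_filter.2 ⟨Multiset.mem_toFinset.2 <| (mem_roots hp').2 ?_,
    hq hx.2 hy.2 hz1.1 hz1.2⟩, hz1.1, hz1.2⟩
  rwa [IsRoot, ← p.deriv]

-- Localized Rolle with multiplicity
theorem card_roots_filter_le_derivative (p : ℝ[X]) (q : ℝ → Prop) [DecidablePred q]
    (hq : ∀ ⦃x z y : ℝ⦄, q x → q y → x < z → z < y → q z) :
    Multiset.card (p.roots.filter q) ≤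
      Multiset.card ((Polynomial.derivative p).roots.filter q) + 1 := by
  set A := p.roots.toFinset.filter q with hA
  set T := (derivative p).roots.toFinset.filter q with hT
  have hcA : Multiset.card (p.roots.filter q) = ∑ x ∈ A, p.roots.count x := by
    rw [hA, ← Multiset.toFinset_filter, ← Multiset.toFinset_sum_count_eq (p.roots.filter q)]
    refine Finset.sum_congr rfl fun x hx => ?_
    rw [Multiset.toFinset_filter, Finset.mem_filter] at hx
    exact Multiset.count_filter_of_pos hx.2
  have hcT : Multiset.card ((derivative p).roots.filter q)
      = ∑ x ∈ T, (derivative p).roots.count x := by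
    rw [hT, ← Multiset.toFinset_filter,
      ← Multiset.toFinset_sum_count_eq ((derivative p).roots.filter q)]
    refine Finset.sum_congr rfl fun x hx => ?_
    rw [Multiset.toFinset_filter, Finset.mem_filter] at hx
    exact Multiset.count_filter_of_pos hx.2
  calc Multiset.card (p.roots.filter q) = ∑ x ∈ A, p.roots.count x := hcA
    _ = ∑ x ∈ A, (p.roots.count x - 1 + 1) := by
        refine Finset.sum_congr rfl fun x hx => (tsub_add_cancel_of_le ?_).symm
        rw [hA, Finset.mem_filter, Multiset.mem_toFinset, ← Multiset.count_pos] at hx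
        exact hx.1
    _ = (∑ x ∈ A, (p.rootMultiplicity x - 1)) + A.card := by
        simp only [Finset.sum_add_distrib, Finset.card_eq_sum_ones, count_roots]
    _ ≤ (∑ x ∈ A, (derivative p).roots.count x) + ((T \ A).card + 1) := by
        refine add_le_add (Finset.sum_le_sum fun x _ => ?_)
          (card_roots_toFinset_filter p q hq)
        rw [count_roots]
        exact rootMultiplicity_sub_one_le_derivative_rootMultiplicity _ _
    _ ≤ (∑ x ∈ A, (derivative p).roots.count x)
        + ((∑ x ∈ T \ A, (derivative p).roots.count x) + 1) := by
        refine add_le_add_right (add_le_add_left ((Finset.card_eq_sum_ones _).trans_le ?_) _) _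
        refine Finset.sum_le_sum fun x hx => ?_
        rw [Nat.succ_le_iff, Multiset.count_pos, ← Multiset.mem_toFinset]
        have := (Finset.mem_sdiff.1 hx).1
        rw [hT, Finset.mem_filter] at this
        exact this.1
    _ ≤ (∑ x ∈ T, (derivative p).roots.count x) + 1 := by
        rw [← add_assoc, ← Finset.sum_union Finset.disjoint_sdiff]
        refine add_le_add_left ?_ 1
        rw [Finset.union_sdiff_self_eq_union]
        refine le_of_eq (Finset.sum_subset Finset.subset_union_right fun x hx hxT => ?_).symm
        rw [Multiset.count_eq_zero]
        intro hmem
        rcases Finset.mem_union.1 hx with hxA | h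
        · exact hxT (by rw [hT, Finset.mem_filter]
                        exact ⟨Multiset.mem_toFinset.2 hmem, (Finset.mem_filter.1 hxA).2⟩)
        · exact hxT h
    _ = Multiset.card ((derivative p).roots.filter q) + 1 := by rw [hcT]

-- sign of a product of nonzero reals
theorem prod_pos_iff_even {ι : Type*} (s : Finset ι) (f : ι → ℝ) (h : ∀ i ∈ s, f i ≠ 0)
    [DecidableEq ι] :
    (0 < ∏ i ∈ s, f i ↔ Even (s.filter (fun i => f i < 0)).card) := by
  classical
  induction s using Finset.cons_induction with
  | empty => simp
  | cons a s ha ih =>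
    have hfa : f a ≠ 0 := h a (Finset.mem_cons_self a s)
    have hprodne : (∏ i ∈ s, f i) ≠ 0 :=
      Finset.prod_ne_zero_iff.2 fun i hi => h i (Finset.mem_cons.2 (Or.inr hi))
    have ih' := ih fun i hi => h i (Finset.mem_cons.2 (Or.inr hi))
    rw [Finset.prod_cons, Finset.filter_cons]
    rcases lt_or_gt_of_ne hfa with hneg | hpos
    · rw [if_pos hneg]
      have : 0 < f a * ∏ i ∈ s, f i ↔ ¬(0 < ∏ i ∈ s, f i) := by
        constructor
        · intro hp hq
          nlinarith
        · intro hq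
          have : (∏ i ∈ s, f i) < 0 := lt_of_le_of_ne (not_lt.1 hq) hprodne
          nlinarith
      rw [this, ih']
      have hanotin : a ∉ s.filter (fun i => f i < 0) := fun hmem => ha (Finset.mem_of_mem_filter a hmem)
      rw [Finset.card_cons, Nat.even_add_one]
    · rw [if_neg (not_lt.2 hpos.le)]
      rw [← ih']
      constructor
      · intro hp
        nlinarith
      · intro hp
        nlinarith


section Det

variable (m : ℕ) (z : (Fin (m+2) → ℝ) × (Fin (m+2) → ℝ))

/-- The model matrix with the `b_ω` corner contributions removed. -/
noncomputable def Nmat : Matrix (Fin (m+2)) (Fin (m+2)) ℝ[X] := fun r s =>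
  (if r = s then X - C (z.2 r) else 0) + (if r + 1 = s ∧ r + 1 ≠ 0 then -C (bfun z r) else 0) +
    (if s + 1 = r ∧ s + 1 ≠ 0 then -C (bfun z s) else 0)

theorem charmatrix_lax_apply (r s : Fin (m+2)) :
    charmatrix (Lax z) r s = Nmat m z r s
      - (if r + 1 = 0 ∧ s = 0 then C (bfun z r) else 0)
      - (if s + 1 = 0 ∧ r = 0 then C (bfun z s) else 0) := by
  rw [charmatrix_apply, Lax, Nmat]
  simp only [diagonal_apply, map_add, apply_ite C, map_neg, map_zero, ite_and]
  split_ifs <;> simp_all <;> ring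

theorem charmatrix_laxbar_apply (r s : Fin (m+2)) :
    charmatrix (LaxBar z) r s = Nmat m z r s
      + (if r + 1 = 0 ∧ s = 0 then C (bfun z r) else 0)
      + (if s + 1 = 0 ∧ r = 0 then C (bfun z s) else 0) := by
  rw [charmatrix_apply, LaxBar, Nmat]
  simp only [diagonal_apply, map_add, apply_ite C, map_neg, map_zero, ite_and, sgn,
    mul_ite, ite_mul, neg_one_mul, one_mul, _root_.map_one]
  split_ifs <;> simp_all <;> ring

noncomputable def Evec (k : Fin (m+2)) : Fin (m+2) → ℝ[X] := Pi.single k 1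

theorem fin_add_one_eq_zero_iff {j : Fin (m+2)} : j + 1 = 0 ↔ j = -1 := by
  constructor
  · intro h; exact eq_neg_of_add_eq_zero_left h
  · rintro rfl; exact neg_add_cancel 1

theorem fin_one_ne_zero' : (1 : Fin (m+2)) ≠ 0 := by
  simp [Fin.ext_iff]

theorem fin_neg_one_ne_zero : (-1 : Fin (m+2)) ≠ 0 := by
  intro h
  have := Fin.coe_neg_one (n := m+1)
  rw [h] at this
  simp at this

theorem charmatrix_lax_eq :
    charmatrix (Lax z) = updateRow (updateRow (Nmat m z) (-1)
        (Nmat m z (-1) + (-C (bfun z (-1))) • Evec m 0)) 0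
        (Nmat m z 0 + (-C (bfun z (-1))) • Evec m (-1)) := by
  refine Matrix.ext fun r s => ?_
  rcases eq_or_ne r 0 with rfl | hr0
  · rw [updateRow_self, charmatrix_lax_apply]
    have h10 : ¬((0:Fin (m+2)) + 1 = 0) := by
      rw [zero_add]; exact fin_one_ne_zero' m
    rw [if_neg (fun h => h10 h.1)]
    simp only [Evec, Pi.add_apply, Pi.smul_apply, Pi.single_apply, smul_eq_mul]
    rcases eq_or_ne s (-1 : Fin (m+2)) with rfl | hs
    · have h1 : (-1 : Fin (m+2)) + 1 = 0 := neg_add_cancel 1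
      simp only [h1, and_true, true_and, if_true, eq_self_iff_true, if_pos, mul_one]
      ring
    · rw [if_neg (fun h => hs ((fin_add_one_eq_zero_iff m).1 h.1)), if_neg hs]
      ring
  rcases eq_or_ne r (-1 : Fin (m+2)) with rfl | hrω
  · rw [updateRow_ne hr0, updateRow_self, charmatrix_lax_apply]
    have : ¬(s + 1 = 0 ∧ (-1 : Fin (m+2)) = 0) := fun h => fin_neg_one_ne_zero m h.2
    rw [if_neg this]
    simp only [Evec, Pi.add_apply, Pi.smul_apply, Pi.single_apply, smul_eq_mul]
    rcases eq_or_ne s (0 : Fin (m+2)) with rfl | hs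
    · have h1 : (-1 : Fin (m+2)) + 1 = 0 := neg_add_cancel 1
      simp only [h1, and_true, true_and, if_true, eq_self_iff_true, if_pos, mul_one]
      ring
    · rw [if_neg (fun h => hs h.2), if_neg hs]
      ring
  · rw [updateRow_ne hr0, updateRow_ne hrω, charmatrix_lax_apply]
    rw [if_neg (fun h => hrω ((fin_add_one_eq_zero_iff m).1 h.1)),
      if_neg (fun h => hr0 h.2)]
    ring

theorem charmatrix_laxbar_eq :
    charmatrix (LaxBar z) = updateRow (updateRow (Nmat m z) (-1)
        (Nmat m z (-1) + (C (bfun z (-1))) • Evec m 0)) 0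
        (Nmat m z 0 + (C (bfun z (-1))) • Evec m (-1)) := by
  refine Matrix.ext fun r s => ?_
  rcases eq_or_ne r 0 with rfl | hr0
  · rw [updateRow_self, charmatrix_laxbar_apply]
    have h10 : ¬((0:Fin (m+2)) + 1 = 0) := by
      rw [zero_add]; exact fin_one_ne_zero' m
    rw [if_neg (fun h => h10 h.1)]
    simp only [Evec, Pi.add_apply, Pi.smul_apply, Pi.single_apply, smul_eq_mul]
    rcases eq_or_ne s (-1 : Fin (m+2)) with rfl | hs
    · have h1 : (-1 : Fin (m+2)) + 1 = 0 := neg_add_cancel 1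
      simp only [h1, and_true, true_and, if_true, eq_self_iff_true, if_pos, mul_one]
      ring
    · rw [if_neg (fun h => hs ((fin_add_one_eq_zero_iff m).1 h.1)), if_neg hs]
      ring
  rcases eq_or_ne r (-1 : Fin (m+2)) with rfl | hrω
  · rw [updateRow_ne hr0, updateRow_self, charmatrix_laxbar_apply]
    have : ¬(s + 1 = 0 ∧ (-1 : Fin (m+2)) = 0) := fun h => fin_neg_one_ne_zero m h.2
    rw [if_neg this]
    simp only [Evec, Pi.add_apply, Pi.smul_apply, Pi.single_apply, smul_eq_mul]
    rcases eq_or_ne s (0 : Fin (m+2)) with rfl | hs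
    · have h1 : (-1 : Fin (m+2)) + 1 = 0 := neg_add_cancel 1
      simp only [h1, and_true, true_and, if_true, eq_self_iff_true, if_pos, mul_one]
      ring
    · rw [if_neg (fun h => hs h.2), if_neg hs]
      ring
  · rw [updateRow_ne hr0, updateRow_ne hrω, charmatrix_laxbar_apply]
    rw [if_neg (fun h => hrω ((fin_add_one_eq_zero_iff m).1 h.1)),
      if_neg (fun h => hr0 h.2)]
    ring

theorem updateRow_comm' {R : Type*} {k : ℕ} (M : Matrix (Fin k) (Fin k) R) {i j : Fin k}
    (hij : i ≠ j) (u v : Fin k → R) :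
    updateRow (updateRow M i u) j v = updateRow (updateRow M j v) i u := by
  refine Matrix.ext fun r s => ?_
  simp only [updateRow_apply]
  rcases eq_or_ne r i with rfl | hri <;> rcases eq_or_ne r j with rfl | hrj <;> simp_all

theorem det_expand (t : ℝ[X]) :
    det (updateRow (updateRow (Nmat m z) (-1) (Nmat m z (-1) + t • Evec m 0)) 0
        (Nmat m z 0 + t • Evec m (-1)))
      = det (Nmat m z) + t * det (updateRow (Nmat m z) (-1) (Evec m 0))
        + (t * det (updateRow (Nmat m z) 0 (Evec m (-1)))
        + t * (t * det (updateRow (updateRow (Nmat m z) 0 (Evec m (-1))) (-1) (Evec m 0)))) := by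
  set N := Nmat m z with hN
  have h0ω : (0 : Fin (m+2)) ≠ -1 := fun h => fin_neg_one_ne_zero m h.symm
  have e1 : (updateRow N (-1) (N (-1) + t • Evec m 0)) 0 = N 0 :=
    updateRow_ne h0ω
  rw [← e1, det_updateRow_add, det_updateRow_smul, updateRow_eq_self]
  rw [updateRow_comm' _ (fin_neg_one_ne_zero m) _ (Evec m (-1))]
  have e2 : (updateRow N 0 (Evec m (-1))) (-1) = N (-1) :=
    updateRow_ne (fin_neg_one_ne_zero m)
  rw [← e2, det_updateRow_add, det_updateRow_smul]
  rw [e2, updateRow_eq_self]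
  have e5 : det ((N.updateRow 0 (Evec m (-1))).updateRow (-1) (N (-1) + t • Evec m 0))
      = det (N.updateRow 0 (Evec m (-1)))
        + t * det ((N.updateRow 0 (Evec m (-1))).updateRow (-1) (Evec m 0)) := by
    rw [← e2, det_updateRow_add, det_updateRow_smul, updateRow_eq_self]
  rw [e5]
  ring

theorem fin_val_add_one' {a : Fin (m+2)} (h : a + 1 ≠ 0) : (a+1).val = a.val + 1 := by
  rw [Fin.val_add_one, if_neg]
  intro hl; subst hl; exact h (Fin.last_add_one _)

theorem fin_val_sub_one' {a : Fin (m+2)} (h : a ≠ 0) : (a-1).val = a.val - 1 := by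
  rw [Fin.coe_sub_one, if_neg h]

theorem fin_vne {a : Fin (m+2)} (h : a ≠ 0) : a.val ≠ 0 := by
  intro h'; exact h (Fin.ext (by rw [h', Fin.val_zero]))

theorem Nmat_eq_zero {r s : Fin (m+2)} (h1 : r ≠ s) (h2 : ¬(r + 1 = s ∧ r + 1 ≠ 0))
    (h3 : ¬(s + 1 = r ∧ s + 1 ≠ 0)) : Nmat m z r s = 0 := by
  rw [Nmat, if_neg h1, if_neg h2, if_neg h3]; ring

theorem detA : det (updateRow (Nmat m z) (-1) (Evec m 0))
    = C (∏ k ∈ Finset.univ.erase (-1 : Fin (m+2)), bfun z k) := by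
  set P := updateRow (Nmat m z) (-1) (Evec m 0) with hP
  set σ : Equiv.Perm (Fin (m+2)) := finRotate (m+2) with hσ
  have hsymm : ∀ i : Fin (m+2), σ.symm i = i - 1 := by
    intro i
    rw [Equiv.symm_apply_eq, hσ, finRotate_succ_apply, sub_add_cancel]
  have hsub_ne : ∀ i : Fin (m+2), i ≠ 0 → i - 1 ≠ -1 := by
    intro i hi h
    apply hi
    have := congrArg (· + 1) h
    simpa [sub_add_cancel] using this
  have htri : (P.submatrix (⇑σ.symm) id).BlockTriangular OrderDual.toDual := by
    intro i j hij
    have hij' : (i : Fin (m+2)) < j := hij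
    have hvij : i.val < j.val := hij'
    simp only [submatrix_apply, id_eq, hsymm]
    rcases eq_or_ne i 0 with rfl | hi0
    · rw [zero_sub, hP, updateRow_self, Evec, Pi.single_apply,
        if_neg (by intro h; subst h; exact absurd hvij (by simp))]
    · rw [hP, updateRow_ne (hsub_ne i hi0)]
      have hv : (i-1).val = i.val - 1 := fin_val_sub_one' m hi0
      have hvi : i.val ≠ 0 := fin_vne m hi0
      refine Nmat_eq_zero m z ?_ ?_ ?_
      · intro h; have := congrArg Fin.val h; omega
      · rintro ⟨h, -⟩
        rw [sub_add_cancel] at h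
        have := congrArg Fin.val h; omega
      · rintro ⟨h, hne⟩
        have hj : (j+1).val = j.val + 1 := fin_val_add_one' m hne
        have := congrArg Fin.val h; omega
  have hdet := det_of_lowerTriangular _ htri
  have hperm := det_permute σ.symm P
  have hdiag : ∀ i : Fin (m+2), (P.submatrix (⇑σ.symm) id) i i
      = if i = 0 then 1 else -C (bfun z (i-1)) := by
    intro i
    simp only [submatrix_apply, id_eq, hsymm]
    rcases eq_or_ne i 0 with rfl | hi0
    · rw [if_pos rfl, zero_sub, hP, updateRow_self, Evec, Pi.single_apply, if_pos rfl]
    · rw [if_neg hi0, hP, updateRow_ne (hsub_ne i hi0), Nmat]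
      have hv : (i-1).val = i.val - 1 := fin_val_sub_one' m hi0
      have hvi : i.val ≠ 0 := fin_vne m hi0
      rw [if_neg (by intro h; have := congrArg Fin.val h; omega),
        if_pos ⟨sub_add_cancel i 1, by rw [sub_add_cancel]; exact hi0⟩,
        if_neg (by rintro ⟨h, hne⟩
                   have hj : (i+1).val = i.val + 1 := fin_val_add_one' m hne
                   have := congrArg Fin.val h; omega)]
      ring
  have hprod : ∏ i : Fin (m+2), (P.submatrix (⇑σ.symm) id) i i
      = (-1:ℝ[X])^(m+1) * C (∏ k ∈ Finset.univ.erase (-1 : Fin (m+2)), bfun z k) := by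
    calc ∏ i : Fin (m+2), (P.submatrix (⇑σ.symm) id) i i
        = ∏ i : Fin (m+2), (if i = 0 then 1 else -C (bfun z (i-1))) :=
          Finset.prod_congr rfl fun i _ => hdiag i
      _ = (if (0:Fin (m+2)) = 0 then (1:ℝ[X]) else -C (bfun z (0-1)))
            * ∏ i ∈ Finset.univ.erase 0, (if i = 0 then 1 else -C (bfun z (i-1))) :=
          (Finset.mul_prod_erase _ _ (Finset.mem_univ 0)).symm
      _ = ∏ i ∈ Finset.univ.erase 0, -C (bfun z (i-1)) := by
          rw [if_pos rfl, one_mul]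
          exact Finset.prod_congr rfl fun i hi =>
            if_neg (Finset.ne_of_mem_erase hi)
      _ = ∏ i ∈ Finset.univ.erase 0, (-1:ℝ[X]) * C (bfun z (i-1)) := by
          exact Finset.prod_congr rfl fun i _ => by ring
      _ = (-1:ℝ[X])^(m+1) * ∏ i ∈ Finset.univ.erase 0, C (bfun z (i-1)) := by
          rw [Finset.prod_mul_distrib, Finset.prod_const,
            Finset.card_erase_of_mem (Finset.mem_univ 0), Finset.card_univ, Fintype.card_fin]
          norm_num
      _ = (-1:ℝ[X])^(m+1) * C (∏ i ∈ Finset.univ.erase 0, bfun z (i-1)) := by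
          rw [map_prod]
      _ = (-1:ℝ[X])^(m+1) * C (∏ k ∈ Finset.univ.erase (-1 : Fin (m+2)), bfun z k) := by
          congr 1
          apply congrArg
          refine Finset.prod_nbij' (fun i => i - 1) (fun k => k + 1) ?_ ?_ ?_ ?_ ?_
          · intro a ha
            exact Finset.mem_erase.2 ⟨hsub_ne a (Finset.ne_of_mem_erase ha), Finset.mem_univ _⟩
          · intro a ha
            refine Finset.mem_erase.2 ⟨?_, Finset.mem_univ _⟩
            intro h
            exact Finset.ne_of_mem_erase ha (by
              have := congrArg (· - 1) h
              simpa [add_sub_cancel_right] using this)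
          · intro a _; exact sub_add_cancel a 1
          · intro a _; exact add_sub_cancel_right a 1
          · intro a _; rfl
  have hsign : ((Equiv.Perm.sign σ.symm : ℤˣ) : ℤ) = (-1)^(m+1) := by
    rw [Equiv.Perm.sign_symm, hσ, sign_finRotate]
    simp
  rw [hdet, hprod] at hperm
  have hcast : ((Equiv.Perm.sign σ.symm : ℤˣ) : ℝ[X]) = (-1:ℝ[X])^(m+1) := by
    have := congrArg (fun t : ℤ => (t : ℝ[X])) hsign
    simpa using this
  rw [hcast] at hperm
  have hne : ((-1:ℝ[X])^(m+1)) ≠ 0 := pow_ne_zero _ (by norm_num)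
  exact (mul_left_cancel₀ hne hperm).symm

theorem detB : det (updateRow (Nmat m z) 0 (Evec m (-1)))
    = C (∏ k ∈ Finset.univ.erase (-1 : Fin (m+2)), bfun z k) := by
  set P := updateRow (Nmat m z) 0 (Evec m (-1)) with hP
  set σ : Equiv.Perm (Fin (m+2)) := finRotate (m+2) with hσ
  have happ : ∀ i : Fin (m+2), σ i = i + 1 := fun i => finRotate_succ_apply i
  have hadd_ne : ∀ i : Fin (m+2), i ≠ -1 → i + 1 ≠ 0 := by
    intro i hi h
    exact hi ((fin_add_one_eq_zero_iff m).1 h)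
  have htri : (P.submatrix (⇑σ) id).BlockTriangular id := by
    intro i j hij
    have hvij : j.val < i.val := hij
    simp only [submatrix_apply, id_eq, happ]
    rcases eq_or_ne i (-1 : Fin (m+2)) with rfl | hiω
    · rw [neg_add_cancel, hP, updateRow_self, Evec, Pi.single_apply,
        if_neg (by intro h; subst h; exact absurd hvij (by simp))]
    · have h10 : i + 1 ≠ 0 := hadd_ne i hiω
      rw [hP, updateRow_ne h10]
      have hv : (i+1).val = i.val + 1 := fin_val_add_one' m h10
      refine Nmat_eq_zero m z ?_ ?_ ?_
      · intro h; have := congrArg Fin.val h; omega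
      · rintro ⟨h, hne⟩
        have hv2 : (i+1+1).val = (i+1).val + 1 := fin_val_add_one' m hne
        have := congrArg Fin.val h; omega
      · rintro ⟨h, hne⟩
        have := add_right_cancel h
        subst this
        omega
  have hdet := det_of_upperTriangular htri
  have hperm := det_permute σ P
  have hdiag : ∀ i : Fin (m+2), (P.submatrix (⇑σ) id) i i
      = if i = -1 then 1 else -C (bfun z i) := by
    intro i
    simp only [submatrix_apply, id_eq, happ]
    rcases eq_or_ne i (-1 : Fin (m+2)) with rfl | hiω
    · rw [if_pos rfl, neg_add_cancel, hP, updateRow_self, Evec, Pi.single_apply, if_pos rfl]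
    · have h10 : i + 1 ≠ 0 := hadd_ne i hiω
      have hv : (i+1).val = i.val + 1 := fin_val_add_one' m h10
      rw [if_neg hiω, hP, updateRow_ne h10, Nmat]
      rw [if_neg (by intro h; have := congrArg Fin.val h; omega),
        if_neg (by rintro ⟨h, hne⟩
                   have hv2 : (i+1+1).val = (i+1).val + 1 := fin_val_add_one' m hne
                   have := congrArg Fin.val h; omega),
        if_pos ⟨rfl, h10⟩]
      ring
  have hprod : ∏ i : Fin (m+2), (P.submatrix (⇑σ) id) i i
      = (-1:ℝ[X])^(m+1) * C (∏ k ∈ Finset.univ.erase (-1 : Fin (m+2)), bfun z k) := by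
    calc ∏ i : Fin (m+2), (P.submatrix (⇑σ) id) i i
        = ∏ i : Fin (m+2), (if i = -1 then 1 else -C (bfun z i)) :=
          Finset.prod_congr rfl fun i _ => hdiag i
      _ = (if (-1:Fin (m+2)) = -1 then (1:ℝ[X]) else -C (bfun z (-1)))
            * ∏ i ∈ Finset.univ.erase (-1), (if i = -1 then 1 else -C (bfun z i)) :=
          (Finset.mul_prod_erase _ _ (Finset.mem_univ (-1))).symm
      _ = ∏ i ∈ Finset.univ.erase (-1), -C (bfun z i) := by
          rw [if_pos rfl, one_mul]
          exact Finset.prod_congr rfl fun i hi => if_neg (Finset.ne_of_mem_erase hi)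
      _ = ∏ i ∈ Finset.univ.erase (-1), (-1:ℝ[X]) * C (bfun z i) :=
          Finset.prod_congr rfl fun i _ => by ring
      _ = (-1:ℝ[X])^(m+1) * ∏ i ∈ Finset.univ.erase (-1), C (bfun z i) := by
          rw [Finset.prod_mul_distrib, Finset.prod_const,
            Finset.card_erase_of_mem (Finset.mem_univ _), Finset.card_univ, Fintype.card_fin]
          norm_num
      _ = (-1:ℝ[X])^(m+1) * C (∏ k ∈ Finset.univ.erase (-1 : Fin (m+2)), bfun z k) := by
          rw [map_prod]
  have hsign : ((Equiv.Perm.sign σ : ℤˣ) : ℤ) = (-1)^(m+1) := by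
    rw [hσ, sign_finRotate]
    simp
  rw [hdet, hprod] at hperm
  have hcast : ((Equiv.Perm.sign σ : ℤˣ) : ℝ[X]) = (-1:ℝ[X])^(m+1) := by
    have := congrArg (fun t : ℤ => (t : ℝ[X])) hsign
    simpa using this
  rw [hcast] at hperm
  have hne : ((-1:ℝ[X])^(m+1)) ≠ 0 := pow_ne_zero _ (by norm_num)
  exact (mul_left_cancel₀ hne hperm).symm

theorem charpoly_laxbar_sub :
    (LaxBar z).charpoly = (Lax z).charpoly + C (4 * ∏ j, bfun z j) := by
  show (charmatrix (LaxBar z)).det = (charmatrix (Lax z)).det + C (4 * ∏ j, bfun z j)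
  rw [charmatrix_lax_eq m z, charmatrix_laxbar_eq m z, det_expand m z (C (bfun z (-1))),
    det_expand m z (-C (bfun z (-1))), detA m z, detB m z]
  have hsplit : (∏ j, bfun z j)
      = bfun z (-1) * ∏ k ∈ Finset.univ.erase (-1 : Fin (m+2)), bfun z k :=
    (Finset.mul_prod_erase _ _ (Finset.mem_univ _)).symm
  rw [hsplit, _root_.map_mul C (4:ℝ), _root_.map_mul C (bfun z (-1)),
    show ((C (4:ℝ)) = (4:ℝ[X])) from map_ofNat C 4]
  ring

end Det


/-- interlacing of the (decreasingly ordered, with multiplicity)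
eigenvalues of L and L̄.  Here 0-indexed: 1-indexed odd r ↔ r.val even.  The
eigenvalue lists are encoded by the characteristic polynomial factorisations
together with antitonicity. -/
theorem stmt13 (n : ℕ) [NeZero n] (hn : 2 ≤ n) (z : (Fin n → ℝ) × (Fin n → ℝ))
    (lam lamBar : Fin n → ℝ) (hmono : Antitone lam) (hmonoBar : Antitone lamBar)
    (hchar : (Lax z).charpoly = ∏ i : Fin n, (Polynomial.X - Polynomial.C (lam i)))
    (hcharBar : (LaxBar z).charpoly =
      ∏ i : Fin n, (Polynomial.X - Polynomial.C (lamBar i))) :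
    (∀ r : Fin n, r.val % 2 = 0 → lam r > lamBar r) ∧
    (∀ r : Fin n, r.val % 2 = 1 → lamBar r > lam r) ∧
    (∀ r s : Fin n, r.val + 1 = s.val → lam r = lam s → r.val % 2 = 1) ∧
    (∀ r s : Fin n, r.val + 1 = s.val → lamBar r = lamBar s → r.val % 2 = 0) := by
    classical
  obtain ⟨m, rfl⟩ : ∃ m, n = m + 2 := ⟨n - 2, by omega⟩
  have hcpos : (0:ℝ) < 4 * ∏ j, bfun z j :=
    mul_pos (by norm_num) (Finset.prod_pos fun j _ => Real.exp_pos _)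
  set c : ℝ := 4 * ∏ j, bfun z j with hcdef
  set f : ℝ[X] := ∏ i : Fin (m+2), (X - C (lam i)) with hf
  set g : ℝ[X] := ∏ i : Fin (m+2), (X - C (lamBar i)) with hg
  have hc : g = f + C c := by
    have := charpoly_laxbar_sub m z
    rw [hchar, hcharBar] at this
    rw [hcdef]
    exact this
  have hevalf : ∀ x : ℝ, f.eval x = ∏ i, (x - lam i) := by
    intro x; rw [hf]; simp [eval_prod]
  have hevalg : ∀ x : ℝ, g.eval x = ∏ i, (x - lamBar i) := by
    intro x; rw [hg]; simp [eval_prod]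
  have hevalgc : ∀ x : ℝ, g.eval x = f.eval x + c := by
    intro x; rw [hc]; simp
  have hrootsf : f.roots = Multiset.map lam Finset.univ.val := by
    rw [hf, Finset.prod_eq_multiset_prod]
    have hmm : Multiset.map (fun i => X - C (lam i)) Finset.univ.val
        = Multiset.map (fun a : ℝ => X - C a) (Multiset.map lam Finset.univ.val) := by
      rw [Multiset.map_map]; rfl
    rw [hmm, roots_multiset_prod_X_sub_C]
  have hrootsg : g.roots = Multiset.map lamBar Finset.univ.val := by
    rw [hg, Finset.prod_eq_multiset_prod]
    have hmm : Multiset.map (fun i => X - C (lamBar i)) Finset.univ.val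
        = Multiset.map (fun a : ℝ => X - C a) (Multiset.map lamBar Finset.univ.val) := by
      rw [Multiset.map_map]; rfl
    rw [hmm, roots_multiset_prod_X_sub_C]
  have hfne : ∀ {x : ℝ}, f.eval x ≠ 0 → ∀ i, x ≠ lam i := by
    intro x hx i h
    apply hx
    rw [hevalf]
    exact Finset.prod_eq_zero (Finset.mem_univ i) (by rw [h, sub_self])
  have hgne : ∀ {x : ℝ}, g.eval x ≠ 0 → ∀ i, x ≠ lamBar i := by
    intro x hx i h
    apply hx
    rw [hevalg]
    exact Finset.prod_eq_zero (Finset.mem_univ i) (by rw [h, sub_self])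
  have hsignf : ∀ x : ℝ, f.eval x ≠ 0 →
      (0 < f.eval x ↔ Even ((Finset.univ.filter (fun i => x < lam i)).card)) := by
    intro x hx
    rw [hevalf]
    have h0 : ∀ i ∈ Finset.univ, x - lam i ≠ 0 := fun i _ => sub_ne_zero.2 (hfne hx i)
    rw [prod_pos_iff_even Finset.univ (fun i => x - lam i) h0]
    have : Finset.univ.filter (fun i : Fin (m+2) => x - lam i < 0)
        = Finset.univ.filter (fun i => x < lam i) := by
      apply Finset.filter_congr
      intro i _
      rw [sub_neg]
    rw [this]
  have hsigng : ∀ x : ℝ, g.eval x ≠ 0 →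
      (0 < g.eval x ↔ Even ((Finset.univ.filter (fun i => x < lamBar i)).card)) := by
    intro x hx
    rw [hevalg]
    have h0 : ∀ i ∈ Finset.univ, x - lamBar i ≠ 0 := fun i _ => sub_ne_zero.2 (hgne hx i)
    rw [prod_pos_iff_even Finset.univ (fun i => x - lamBar i) h0]
    have : Finset.univ.filter (fun i : Fin (m+2) => x - lamBar i < 0)
        = Finset.univ.filter (fun i => x < lamBar i) := by
      apply Finset.filter_congr
      intro i _
      rw [sub_neg]
    rw [this]
  have hsep : ∀ i j, lam i ≠ lamBar j := by
    intro i j h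
    have h1 : f.eval (lam i) = 0 := by
      rw [hevalf]
      exact Finset.prod_eq_zero (Finset.mem_univ i) (sub_self _)
    have h2 : g.eval (lam i) = 0 := by
      rw [hevalg]
      exact Finset.prod_eq_zero (Finset.mem_univ j) (by rw [h, sub_self])
    rw [hevalgc, h1] at h2
    linarith
  have hf0 : f ≠ 0 := by
    rw [hf]
    exact (monic_prod_of_monic _ _ fun i _ => monic_X_sub_C _).ne_zero
  have hg0 : g ≠ 0 := by
    rw [hg]
    exact (monic_prod_of_monic _ _ fun i _ => monic_X_sub_C _).ne_zero
  have hpick : ∀ a b : ℝ, a < b → ∃ x, a < x ∧ x < b ∧ f.eval x ≠ 0 ∧ g.eval x ≠ 0 := by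
    intro a b hab
    have hfin : ({y : ℝ | f.IsRoot y} ∪ {y : ℝ | g.IsRoot y}).Finite :=
      (Polynomial.finite_setOf_isRoot hf0).union (Polynomial.finite_setOf_isRoot hg0)
    have hinf : (Set.Ioo a b).Infinite := Set.Ioo_infinite hab
    obtain ⟨x, hx⟩ := (hinf.diff hfin).nonempty
    exact ⟨x, hx.1.1, hx.1.2, fun h => hx.2 (Or.inl h), fun h => hx.2 (Or.inr h)⟩
  have hkey : ∀ x : ℝ, f.eval x ≠ 0 → g.eval x ≠ 0 →
      ((Finset.univ.filter (fun i : Fin (m+2) => x < lam i)).card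
          ≤ (Finset.univ.filter (fun i : Fin (m+2) => x < lamBar i)).card + 1
        ∧ (Finset.univ.filter (fun i : Fin (m+2) => x < lamBar i)).card
          ≤ (Finset.univ.filter (fun i : Fin (m+2) => x < lam i)).card + 1) := by
    intro x hfx hgx
    have hd : derivative g = derivative f := by rw [hc]; simp
    have hq1 : ∀ ⦃a z' y : ℝ⦄, x < a → x < y → a < z' → z' < y → x < z' :=
      fun a z' y ha _ haz _ => lt_trans ha haz
    have hq2 : ∀ ⦃a z' y : ℝ⦄, a < x → y < x → a < z' → z' < y → z' < x :=
      fun a z' y _ hy _ hzy => lt_trans hzy hy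
    have hRAf := card_roots_filter_le_derivative f (fun y => x < y) hq1
    have hRBf := card_roots_filter_le_derivative f (fun y => y < x) hq2
    have hRAg := card_roots_filter_le_derivative g (fun y => x < y) hq1
    have hRBg := card_roots_filter_le_derivative g (fun y => y < x) hq2
    rw [hd] at hRAg hRBg
    have hdeg : f.natDegree = m + 2 := by
      rw [hf, natDegree_prod_of_monic _ _ fun i _ => monic_X_sub_C _]
      simp [natDegree_X_sub_C]
    have hDle : Multiset.card (derivative f).roots ≤ m + 1 := by
      refine le_trans (card_roots' _) ?_
      have := natDegree_derivative_le f
      omega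
    have hDsplit : Multiset.card ((derivative f).roots.filter (fun y => x < y))
        + Multiset.card ((derivative f).roots.filter (fun y => y < x)) ≤ m + 1 := by
      have hdisj := Multiset.filter_add_filter (fun y => x < y) (fun y => y < x)
        (derivative f).roots
      have h1 : Multiset.card ((derivative f).roots.filter (fun y => x < y ∧ y < x)) = 0 := by
        rw [Multiset.card_eq_zero, Multiset.filter_eq_nil]
        rintro a _ ⟨ha1, ha2⟩
        exact absurd (lt_trans ha1 ha2) (lt_irrefl x)
      have h2 : Multiset.card ((derivative f).roots.filter (fun y => x < y ∨ y < x))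
          ≤ Multiset.card (derivative f).roots :=
        Multiset.card_le_card (Multiset.filter_le _ _)
      have h3 := congrArg Multiset.card hdisj
      rw [Multiset.card_add, Multiset.card_add] at h3
      omega
    have hsplit : ∀ (lm : Fin (m+2) → ℝ) (p : ℝ[X]), p.eval x ≠ 0 →
        p.roots = Multiset.map lm Finset.univ.val →
        (∀ {y : ℝ}, p.eval y ≠ 0 → ∀ i, y ≠ lm i) →
        Multiset.card (p.roots.filter (fun y => x < y))
          + Multiset.card (p.roots.filter (fun y => y < x)) = m + 2 := by
      intro lm p hpx hr hne
      have hall : ∀ a ∈ p.roots, (x < a ∨ a < x) := by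
        intro a ha
        rcases lt_trichotomy x a with h|h|h
        · exact Or.inl h
        · exfalso
          subst h
          rw [hr] at ha
          obtain ⟨i, _, hi⟩ := Multiset.mem_map.1 ha
          exact hne hpx i hi.symm
        · exact Or.inr h
      have hdisj := Multiset.filter_add_filter (fun y => x < y) (fun y => y < x) p.roots
      have h1 : Multiset.card (p.roots.filter (fun y => x < y ∧ y < x)) = 0 := by
        rw [Multiset.card_eq_zero, Multiset.filter_eq_nil]
        rintro a _ ⟨ha1, ha2⟩
        exact absurd (lt_trans ha1 ha2) (lt_irrefl x)
      have h2 : p.roots.filter (fun y => x < y ∨ y < x) = p.roots :=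
        Multiset.filter_eq_self.2 hall
      have hcard : Multiset.card p.roots = m + 2 := by
        rw [hr, Multiset.card_map]
        simp
      have h3 := congrArg Multiset.card hdisj
      rw [Multiset.card_add, Multiset.card_add, h2] at h3
      omega
    have hfsplit := hsplit lam f hfx hrootsf (fun hy i => hfne hy i)
    have hgsplit := hsplit lamBar g hgx hrootsg (fun hy i => hgne hy i)
    have t1 : Multiset.card (f.roots.filter (fun y => x < y))
        = (Finset.univ.filter (fun i : Fin (m+2) => x < lam i)).card := by
      rw [hrootsf, Multiset.filter_map, Multiset.card_map]
      rfl
    have t2 : Multiset.card (g.roots.filter (fun y => x < y))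
        = (Finset.univ.filter (fun i : Fin (m+2) => x < lamBar i)).card := by
      rw [hrootsg, Multiset.filter_map, Multiset.card_map]
      rfl
    omega
  have main : ∀ r : Fin (m+2),
      (r.val % 2 = 0 → lamBar r < lam r) ∧ (r.val % 2 = 1 → lam r < lamBar r) := by
    intro r
    constructor
    · intro hr
      by_contra hcon
      push_neg at hcon
      have hlt : lam r < lamBar r := lt_of_le_of_ne hcon (hsep r r)
      obtain ⟨x, hx1, hx2, hfx, hgx⟩ := hpick _ _ hlt
      have hb1 : r.val + 1 ≤ (Finset.univ.filter (fun i => x < lamBar i)).card := by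
        have hsub : Finset.Iic r ⊆ Finset.univ.filter (fun i => x < lamBar i) := by
          intro i hi
          rw [Finset.mem_filter]
          exact ⟨Finset.mem_univ _, lt_of_lt_of_le hx2 (hmonoBar (Finset.mem_Iic.1 hi))⟩
        have := Finset.card_le_card hsub
        rwa [Fin.card_Iic] at this
      have hb2 : (Finset.univ.filter (fun i => x < lam i)).card ≤ r.val := by
        have hsub : Finset.univ.filter (fun i => x < lam i) ⊆ Finset.Iio r := by
          intro i hi
          rw [Finset.mem_filter] at hi
          rw [Finset.mem_Iio]
          by_contra hir
          push_neg at hir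
          exact absurd hi.2 (not_lt.2 (le_of_lt (lt_of_le_of_lt (hmono hir) hx1)))
        have := Finset.card_le_card hsub
        rwa [Fin.card_Iio] at this
      have hk := hkey x hfx hgx
      have haEq : (Finset.univ.filter (fun i => x < lam i)).card = r.val := by omega
      have hbEq : (Finset.univ.filter (fun i => x < lamBar i)).card = r.val + 1 := by omega
      have hfpos : 0 < f.eval x := by
        rw [hsignf x hfx, haEq]
        exact Nat.even_iff.2 hr
      have hgpos : 0 < g.eval x := by
        rw [hevalgc]
        linarith
      have hev := (hsigng x hgx).1 hgpos
      rw [hbEq, Nat.even_add_one] at hev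
      exact hev (Nat.even_iff.2 hr)
    · intro hr
      by_contra hcon
      push_neg at hcon
      have hlt : lamBar r < lam r := lt_of_le_of_ne hcon (Ne.symm (hsep r r))
      obtain ⟨x, hx1, hx2, hfx, hgx⟩ := hpick _ _ hlt
      have hb1 : r.val + 1 ≤ (Finset.univ.filter (fun i => x < lam i)).card := by
        have hsub : Finset.Iic r ⊆ Finset.univ.filter (fun i => x < lam i) := by
          intro i hi
          rw [Finset.mem_filter]
          exact ⟨Finset.mem_univ _, lt_of_lt_of_le hx2 (hmono (Finset.mem_Iic.1 hi))⟩
        have := Finset.card_le_card hsub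
        rwa [Fin.card_Iic] at this
      have hb2 : (Finset.univ.filter (fun i => x < lamBar i)).card ≤ r.val := by
        have hsub : Finset.univ.filter (fun i => x < lamBar i) ⊆ Finset.Iio r := by
          intro i hi
          rw [Finset.mem_filter] at hi
          rw [Finset.mem_Iio]
          by_contra hir
          push_neg at hir
          exact absurd hi.2 (not_lt.2 (le_of_lt (lt_of_le_of_lt (hmonoBar hir) hx1)))
        have := Finset.card_le_card hsub
        rwa [Fin.card_Iio] at this
      have hk := hkey x hfx hgx
      have haEq : (Finset.univ.filter (fun i => x < lam i)).card = r.val + 1 := by omega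
      have hbEq : (Finset.univ.filter (fun i => x < lamBar i)).card = r.val := by omega
      have hfpos : 0 < f.eval x := by
        rw [hsignf x hfx, haEq]
        rw [Nat.even_add_one]
        intro hev
        rw [Nat.even_iff, hr] at hev
        omega
      have hgpos : 0 < g.eval x := by
        rw [hevalgc]
        linarith
      have hev := (hsigng x hgx).1 hgpos
      rw [hbEq, Nat.even_iff, hr] at hev
      omega
  refine ⟨fun r hr => (main r).1 hr, fun r hr => (main r).2 hr, ?_, ?_⟩
  · intro r s hrs heq
    rcases Nat.mod_two_eq_zero_or_one r.val with h0 | h1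
    · exfalso
      have h1s : s.val % 2 = 1 := by omega
      have hle : r ≤ s := by
        rw [Fin.le_def]
        omega
      have c1 : lamBar r < lam r := (main r).1 h0
      have c2 : lam s < lamBar s := (main s).2 h1s
      have c3 : lamBar s ≤ lamBar r := hmonoBar hle
      rw [heq] at c1
      linarith
    · exact h1
  · intro r s hrs heq
    rcases Nat.mod_two_eq_zero_or_one r.val with h0 | h1
    · exact h0
    · exfalso
      have h0s : s.val % 2 = 0 := by omega
      have hle : r ≤ s := by
        rw [Fin.le_def]
        omega
      have c1 : lam r < lamBar r := (main r).2 h1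
      have c2 : lamBar s < lam s := (main s).1 h0s
      have c3 : lam s ≤ lam r := hmono hle
      rw [heq] at c1
      linarith
end

section
/- Let ε, σ ∈ {−1, +1}^n, and fix a phase-space point z_* ∈ ℝ^{2n}, real numbers λ, μ, and vectors u, v, w, x ∈ ℝ^n satisfying L^ε(z_*)u = λu, L^ε(z_*)v = λv, L^σ(z_*)w = μw and L^σ(z_*)x = μx. Define smooth functions f, g : ℝ^{2n} → ℝ by f(z) = uᵀ L^ε(z) v and g(z) = wᵀ L^σ(z) x. If λ ≠ μ, or if Π_{m=1}^n ε_m σ_m = −1, then the Poisson bracket {f, g} vanishes at z_*: {f, g}(z_*) = 0. -/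
open Matrix BigOperators

/-- The Lax matrix with signs ε. -/
noncomputable def Leps {n : ℕ} [NeZero n] (ε : Fin n → ℝ)
    (z : (Fin n → ℝ) × (Fin n → ℝ)) : Matrix (Fin n) (Fin n) ℝ := fun r s =>
  (if r = s then z.2 r else 0) + (if r + 1 = s then ε r * bfun z r else 0) +
    (if s + 1 = r then ε s * bfun z s else 0)


set_option linter.unusedSectionVars false

section Stmt14Aux

variable {n : ℕ} [NeZero n]

lemma shift_sum14 (F : Fin n → ℝ) : ∑ j : Fin n, F (j + 1) = ∑ j : Fin n, F j :=
  Fintype.sum_equiv (Equiv.addRight 1) _ _ (fun _ => rfl)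

open Fin.NatCast in
lemma monodromy14 (h D : Fin n → ℝ) (hrec : ∀ j, D (j + 1) = h j * D j)
    (hprod : ∏ m : Fin n, h m = -1) : ∀ j, D j = 0 := by
  intro j
  have claim : ∀ k : ℕ, D (j + k) = (∏ i ∈ Finset.range k, h (j + i)) * D j := by
    intro k
    induction k with
    | zero => simp
    | succ k ih =>
        have : ((k+1 : ℕ) : Fin n) = (k : Fin n) + 1 := by push_cast; ring
        rw [this, ← add_assoc, hrec, ih, Finset.prod_range_succ]; ring
  have h1 := claim n
  have h2 : ((n : ℕ) : Fin n) = 0 := by simp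
  have h3 : (∏ i ∈ Finset.range n, h (j + i)) = ∏ m : Fin n, h m := by
    rw [← Fin.prod_univ_eq_prod_range (fun i : ℕ => h (j + i)) n]
    have : ∀ i : Fin n, h (j + ((i : ℕ) : Fin n)) = h (j + i) := by
      intro i; rw [Fin.cast_val_eq_self]
    rw [Fintype.prod_congr _ _ this]
    exact Equiv.prod_comp (Equiv.addLeft j) h
  rw [h2, add_zero, h3, hprod] at h1
  linarith

/-- α-type coefficient occurring in the `q`-derivative of the quadratic form. -/
def alF (e u v : Fin n → ℝ) (j : Fin n) : ℝ := e j * (u j * v (j + 1) + u (j + 1) * v j)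

/-- cross Wronskian of eigenvectors of two Lax matrices. -/
def DW (e s u w : Fin n → ℝ) (j : Fin n) : ℝ := e j * u (j + 1) * w j - s j * u j * w (j + 1)

theorem key14 (e s pp h : Fin n → ℝ)
    (hs : ∀ j, s j = h j * e j) (hh : ∀ j, h j * h j = 1)
    (u v w x : Fin n → ℝ) (lam mu : ℝ)
    (hu : ∀ j, pp j * u j + e j * u (j + 1) + e (j - 1) * u (j - 1) = lam * u j)
    (hv : ∀ j, pp j * v j + e j * v (j + 1) + e (j - 1) * v (j - 1) = lam * v j)
    (hw : ∀ j, pp j * w j + s j * w (j + 1) + s (j - 1) * w (j - 1) = mu * w j)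
    (hx : ∀ j, pp j * x j + s j * x (j + 1) + s (j - 1) * x (j - 1) = mu * x j)
    (hcase : lam ≠ mu ∨ ∏ m : Fin n, h m = -1) :
    ∑ j : Fin n, (alF e u v j * (w j * x j) - alF s w x j * (u j * v j)) -
      ∑ j : Fin n, (alF e u v j * (w (j+1) * x (j+1)) - alF s w x j * (u (j+1) * v (j+1))) = 0 := by
  set X := ∑ j : Fin n, (alF e u v j * (w j * x j) - alF s w x j * (u j * v j)) with hX
  set Y := ∑ j : Fin n, (alF e u v j * (w (j+1) * x (j+1)) - alF s w x j * (u (j+1) * v (j+1))) with hY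
  set Z := ∑ j : Fin n, u j * v j * w j * x j with hZ
  have hYs : Y = ∑ j : Fin n, (alF e u v (j-1) * (w j * x j) - alF s w x (j-1) * (u j * v j)) := by
    rw [hY, ← shift_sum14 (fun j => alF e u v (j-1) * (w j * x j) - alF s w x (j-1) * (u j * v j))]
    apply Finset.sum_congr rfl; intro j _
    simp [add_sub_cancel_right]
  -- Relation A : X + Y = 2 (lam - mu) Z
  have hA : X + Y = 2 * (lam - mu) * Z := by
    rw [hX, hYs, hZ, ← Finset.sum_add_distrib, Finset.mul_sum]
    apply Finset.sum_congr rfl; intro j _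
    have h1 := hu j; have h2 := hv j; have h3 := hw j; have h4 := hx j
    simp only [alF, sub_add_cancel]
    linear_combination (v j * (w j * x j)) * h1 + (u j * (w j * x j)) * h2
      - (x j * (u j * v j)) * h3 - (w j * (u j * v j)) * h4
  -- D recursions
  have hDuw : ∀ j, DW e s u w j = DW s e u w (j - 1) + (lam - mu) * (u j * w j) := by
    intro j
    simp only [DW, sub_add_cancel]
    linear_combination (w j) * hu j - (u j) * hw j
  have hDvx : ∀ j, DW e s v x j = DW s e v x (j - 1) + (lam - mu) * (v j * x j) := by
    intro j
    simp only [DW, sub_add_cancel]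
    linear_combination (x j) * hv j - (v j) * hx j
  -- Dbar = h * D
  have hbar : ∀ (a c : Fin n → ℝ) (j : Fin n), DW s e a c j = h j * DW e s a c j := by
    intro a c j
    simp only [DW, hs]
    linear_combination (e j * a j * c (j+1)) * hh j
  -- Y expressed via Dbar  (pointwise ring identity)
  have hYD : Y = -∑ j : Fin n, (u (j+1) * w (j+1) * DW s e v x j + v (j+1) * x (j+1) * DW s e u w j) := by
    rw [hY, ← Finset.sum_neg_distrib]
    apply Finset.sum_congr rfl; intro j _
    simp only [alF, DW]; ring
  -- Relation C : (lam - mu) * Y = (lam - mu)^2 * Z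
  have hC : (lam - mu) * Y = (lam - mu)^2 * Z := by
    have hDD : ∑ j : Fin n, DW e s u w j * DW e s v x j
        = ∑ j : Fin n, DW s e u w (j-1) * DW s e v x (j-1) := by
      have p1 : ∀ j, DW e s u w j * DW e s v x j = DW s e u w j * DW s e v x j := by
        intro j
        rw [hbar, hbar]
        linear_combination (-(DW e s u w j * DW e s v x j)) * hh j
      rw [Finset.sum_congr rfl (fun j _ => p1 j),
        ← shift_sum14 (fun j => DW s e u w (j-1) * DW s e v x (j-1))]
      apply Finset.sum_congr rfl; intro j _
      simp [add_sub_cancel_right]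
    have expand : ∀ j : Fin n, DW e s u w j * DW e s v x j
        = DW s e u w (j-1) * DW s e v x (j-1)
          + ((lam - mu) * (u j * w j * DW s e v x (j-1) + v j * x j * DW s e u w (j-1))
             + (lam - mu)^2 * (u j * v j * w j * x j)) := by
      intro j
      linear_combination (DW e s v x j) * hDuw j + (DW s e u w (j-1) + (lam - mu) * (u j * w j)) * hDvx j
    have hsplit : ∑ j : Fin n, DW e s u w j * DW e s v x j
        = ∑ j : Fin n, DW s e u w (j-1) * DW s e v x (j-1)
          + ((lam - mu) * ∑ j : Fin n, (u j * w j * DW s e v x (j-1) + v j * x j * DW s e u w (j-1))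
             + (lam - mu)^2 * Z) := by
      rw [Finset.sum_congr rfl (fun j _ => expand j), Finset.sum_add_distrib,
        Finset.sum_add_distrib, ← Finset.mul_sum, ← Finset.mul_sum, hZ]
    have hsum0 : (lam - mu) * ∑ j : Fin n, (u j * w j * DW s e v x (j-1) + v j * x j * DW s e u w (j-1))
        + (lam - mu)^2 * Z = 0 := by
      have := hsplit.symm.trans hDD
      linarith
    have hshift2 : ∑ j : Fin n, (u j * w j * DW s e v x (j-1) + v j * x j * DW s e u w (j-1))
        = ∑ j : Fin n, (u (j+1) * w (j+1) * DW s e v x j + v (j+1) * x (j+1) * DW s e u w j) := by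
      rw [← shift_sum14 (fun j => u j * w j * DW s e v x (j-1) + v j * x j * DW s e u w (j-1))]
      apply Finset.sum_congr rfl; intro j _
      simp [add_sub_cancel_right]
    rw [hshift2] at hsum0
    rw [hYD]
    linarith
  rcases eq_or_ne lam mu with heq | hne
  · -- lam = mu : use the sign product
    have hprod : ∏ m : Fin n, h m = -1 := by
      rcases hcase with hc | hc
      · exact absurd heq hc
      · exact hc
    subst heq
    have hz1 : ∀ j, DW e s u w j = 0 := by
      apply monodromy14 h _ _ hprod
      intro j
      have := hDuw (j + 1)
      simp only [add_sub_cancel_right, sub_self, zero_mul, add_zero] at this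
      rw [this, hbar]
    have hz2 : ∀ j, DW e s v x j = 0 := by
      apply monodromy14 h _ _ hprod
      intro j
      have := hDvx (j + 1)
      simp only [add_sub_cancel_right, sub_self, zero_mul, add_zero] at this
      rw [this, hbar]
    have hY0 : Y = 0 := by
      rw [hYD]
      have : ∀ j : Fin n, u (j+1) * w (j+1) * DW s e v x j + v (j+1) * x (j+1) * DW s e u w j = 0 := by
        intro j; rw [hbar, hbar, hz1, hz2]; ring
      rw [Finset.sum_congr rfl (fun j _ => this j)]
      simp
    have : X = 0 := by
      have := hA; rw [hY0] at this; simp at this; linarith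
    rw [this, hY0]; ring
  · -- lam ≠ mu
    have hYval : Y = (lam - mu) * Z := by
      have hd : lam - mu ≠ 0 := sub_ne_zero_of_ne hne
      have : (lam - mu) * Y = (lam - mu) * ((lam - mu) * Z) := by ring_nf; ring_nf at hC; linarith
      exact mul_left_cancel₀ hd this
    have hXval : X = (lam - mu) * Z := by linarith [hA, hYval]
    rw [hXval, hYval]; ring

lemma eigen_expand14 (ε : Fin n → ℝ) (z : (Fin n → ℝ) × (Fin n → ℝ)) (a : Fin n → ℝ) (κ : ℝ)
    (ha : Leps ε z *ᵥ a = κ • a) (r : Fin n) :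
    z.2 r * a r + (ε r * bfun z r) * a (r + 1)
      + (ε (r - 1) * bfun z (r - 1)) * a (r - 1) = κ * a r := by
  have h := congrFun ha r
  simp only [Matrix.mulVec, dotProduct, Leps, Pi.smul_apply, smul_eq_mul] at h
  rw [← h]
  have hcond : ∀ s : Fin n, (s + 1 = r) = (s = r - 1) := by
    intro s; simp [eq_sub_iff_add_eq]
  simp only [hcond, add_mul, ite_mul, zero_mul, Finset.sum_add_distrib,
    Finset.sum_ite_eq, Finset.sum_ite_eq', Finset.mem_univ, if_true]

noncomputable def Pq14 (r : Fin n) : ((Fin n → ℝ) × (Fin n → ℝ)) →L[ℝ] ℝ :=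
  (ContinuousLinearMap.proj r).comp (ContinuousLinearMap.fst ℝ (Fin n → ℝ) (Fin n → ℝ))

noncomputable def Pp14 (r : Fin n) : ((Fin n → ℝ) × (Fin n → ℝ)) →L[ℝ] ℝ :=
  (ContinuousLinearMap.proj r).comp (ContinuousLinearMap.snd ℝ (Fin n → ℝ) (Fin n → ℝ))

noncomputable def Lq14 (r : Fin n) : ((Fin n → ℝ) × (Fin n → ℝ)) →L[ℝ] ℝ :=
  (1/2 : ℝ) • (Pq14 r - Pq14 (r + 1))

@[simp] lemma Pq14_apply (r : Fin n) (y : (Fin n → ℝ) × (Fin n → ℝ)) : Pq14 r y = y.1 r := rfl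
@[simp] lemma Pp14_apply (r : Fin n) (y : (Fin n → ℝ) × (Fin n → ℝ)) : Pp14 r y = y.2 r := rfl

lemma Lq14_apply (r : Fin n) (y : (Fin n → ℝ) × (Fin n → ℝ)) :
    Lq14 r y = (y.1 r - y.1 (r + 1)) / 2 := by
  simp [Lq14, ContinuousLinearMap.smul_apply, ContinuousLinearMap.sub_apply]
  ring

/-- rewrite the quadratic form as an explicit sum. -/
lemma quadform_eq14 (ε u v : Fin n → ℝ) :
    (fun y : (Fin n → ℝ) × (Fin n → ℝ) => u ⬝ᵥ (Leps ε y *ᵥ v)) =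
    fun y => ∑ r : Fin n, ((u r * v r) * y.2 r
      + (ε r * (u r * v (r + 1) + u (r + 1) * v r)) * Real.exp ((y.1 r - y.1 (r + 1)) / 2)) := by
  funext y
  simp only [dotProduct, Matrix.mulVec, Leps]
  have hcond : ∀ r s : Fin n, (s + 1 = r) = (s = r - 1) := by
    intro r s; simp [eq_sub_iff_add_eq]
  simp only [add_mul, ite_mul, zero_mul, Finset.sum_add_distrib, Finset.mul_sum,
    mul_ite, mul_zero, Finset.sum_ite_eq, Finset.mem_univ, if_true]
  simp only [hcond, Finset.sum_ite_eq', Finset.mem_univ, if_true]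
  have h3 : ∑ r : Fin n, u r * (ε (r-1) * bfun y (r-1) * v (r-1))
      = ∑ r : Fin n, u (r+1) * (ε r * bfun y r * v r) := by
    rw [← shift_sum14 (fun r => u r * (ε (r-1) * bfun y (r-1) * v (r-1)))]
    apply Finset.sum_congr rfl; intro r _
    simp [add_sub_cancel_right]
  simp only [mul_add, Finset.sum_add_distrib, h3]
  rw [← Finset.sum_add_distrib, ← Finset.sum_add_distrib, ← Finset.sum_add_distrib]
  apply Finset.sum_congr rfl; intro r _
  simp only [bfun]
  ring

noncomputable def qcoef14 (ε u v : Fin n → ℝ) (z : (Fin n → ℝ) × (Fin n → ℝ)) (r : Fin n) : ℝ :=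
  ε r * (u r * v (r + 1) + u (r + 1) * v r) * Real.exp ((z.1 r - z.1 (r + 1)) / 2)

noncomputable def Phi14 (ε u v : Fin n → ℝ) (z : (Fin n → ℝ) × (Fin n → ℝ)) :
    ((Fin n → ℝ) × (Fin n → ℝ)) →L[ℝ] ℝ :=
  ∑ r : Fin n, ((u r * v r) • Pp14 r + (qcoef14 ε u v z r) • Lq14 r)

lemma hasFDeriv_quadform14 (ε u v : Fin n → ℝ) (z : (Fin n → ℝ) × (Fin n → ℝ)) :
    HasFDerivAt (fun y => u ⬝ᵥ (Leps ε y *ᵥ v)) (Phi14 ε u v z) z := by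
  rw [quadform_eq14]
  unfold Phi14
  apply HasFDerivAt.fun_sum
  intro r _
  apply HasFDerivAt.add
  · exact ((Pp14 r).hasFDerivAt).const_mul _
  · have h1 : HasFDerivAt (fun y : (Fin n → ℝ) × (Fin n → ℝ) => Real.exp (Lq14 r y))
        (Real.exp (Lq14 r z) • Lq14 r) z := ((Lq14 r).hasFDerivAt).exp
    simp only [Lq14_apply] at h1
    have h2 := h1.const_mul (ε r * (u r * v (r + 1) + u (r + 1) * v r))
    rw [smul_smul] at h2
    exact h2

lemma Phi14_p (ε u v : Fin n → ℝ) (z : (Fin n → ℝ) × (Fin n → ℝ)) (j : Fin n) :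
    Phi14 ε u v z (0, Pi.single j 1) = u j * v j := by
  unfold Phi14
  rw [ContinuousLinearMap.sum_apply]
  have : ∀ r : Fin n, ((u r * v r) • Pp14 r + (qcoef14 ε u v z r) • Lq14 r) (0, Pi.single j 1)
      = if r = j then u r * v r else 0 := by
    intro r
    rw [ContinuousLinearMap.add_apply, ContinuousLinearMap.smul_apply,
      ContinuousLinearMap.smul_apply, Lq14_apply, Pp14_apply]
    simp [Pi.single_apply]
  rw [Finset.sum_congr rfl (fun r _ => this r), Finset.sum_ite_eq']
  simp

lemma Phi14_q (ε u v : Fin n → ℝ) (z : (Fin n → ℝ) × (Fin n → ℝ)) (j : Fin n) :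
    Phi14 ε u v z (Pi.single j 1, 0) = (qcoef14 ε u v z j - qcoef14 ε u v z (j - 1)) / 2 := by
  unfold Phi14
  rw [ContinuousLinearMap.sum_apply]
  have : ∀ r : Fin n, ((u r * v r) • Pp14 r + (qcoef14 ε u v z r) • Lq14 r) (Pi.single j 1, 0)
      = (if r = j then qcoef14 ε u v z r / 2 else 0)
        - (if r = j - 1 then qcoef14 ε u v z r / 2 else 0) := by
    intro r
    rw [ContinuousLinearMap.add_apply, ContinuousLinearMap.smul_apply,
      ContinuousLinearMap.smul_apply, Lq14_apply, Pp14_apply]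
    have hc : (r + 1 = j) = (r = j - 1) := by simp [eq_sub_iff_add_eq]
    simp only [Pi.single_apply, hc]
    split_ifs <;> simp <;> ring
  rw [Finset.sum_congr rfl (fun r _ => this r), Finset.sum_sub_distrib,
    Finset.sum_ite_eq', Finset.sum_ite_eq']
  simp [sub_div]

end Stmt14Aux

/-- if λ ≠ μ or Π ε_m σ_m = −1, the Poisson bracket of the
spectral components vanishes at z_*. -/
theorem stmt14 (n : ℕ) [NeZero n] (hn : 2 ≤ n) (ε σ : Fin n → ℝ)
    (hε : ∀ m, ε m = 1 ∨ ε m = -1) (hσ : ∀ m, σ m = 1 ∨ σ m = -1)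
    (z : (Fin n → ℝ) × (Fin n → ℝ)) (lam mu : ℝ) (u v w x : Fin n → ℝ)
    (hu : Leps ε z *ᵥ u = lam • u) (hv : Leps ε z *ᵥ v = lam • v)
    (hw : Leps σ z *ᵥ w = mu • w) (hx : Leps σ z *ᵥ x = mu • x)
    (hcase : lam ≠ mu ∨ ∏ m : Fin n, ε m * σ m = -1) :
    pb (fun y => u ⬝ᵥ (Leps ε y *ᵥ v)) (fun y => w ⬝ᵥ (Leps σ y *ᵥ x)) z = 0 := by
  classical
  set e : Fin n → ℝ := fun m => ε m * bfun z m with he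
  set s : Fin n → ℝ := fun m => σ m * bfun z m with hsdef
  set h : Fin n → ℝ := fun m => ε m * σ m with hhdef
  have hs : ∀ j, s j = h j * e j := by
    intro j
    rcases hε j with h1 | h1 <;> simp [he, hsdef, hhdef, h1] <;> ring
  have hh : ∀ j, h j * h j = 1 := by
    intro j
    rcases hε j with h1 | h1 <;> rcases hσ j with h2 | h2 <;> simp [hhdef, h1, h2]
  have hu' : ∀ j, z.2 j * u j + e j * u (j + 1) + e (j - 1) * u (j - 1) = lam * u j :=
    fun j => eigen_expand14 ε z u lam hu j
  have hv' : ∀ j, z.2 j * v j + e j * v (j + 1) + e (j - 1) * v (j - 1) = lam * v j :=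
    fun j => eigen_expand14 ε z v lam hv j
  have hw' : ∀ j, z.2 j * w j + s j * w (j + 1) + s (j - 1) * w (j - 1) = mu * w j :=
    fun j => eigen_expand14 σ z w mu hw j
  have hx' : ∀ j, z.2 j * x j + s j * x (j + 1) + s (j - 1) * x (j - 1) = mu * x j :=
    fun j => eigen_expand14 σ z x mu hx j
  have hcase' : lam ≠ mu ∨ ∏ m : Fin n, h m = -1 := hcase
  have key := key14 e s z.2 h hs hh u v w x lam mu hu' hv' hw' hx' hcase'
  -- identify qcoef with alF
  have hqc : ∀ r, qcoef14 ε u v z r = alF e u v r := by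
    intro r; simp only [qcoef14, alF, he, bfun]; ring
  have hqs : ∀ r, qcoef14 σ w x z r = alF s w x r := by
    intro r; simp only [qcoef14, alF, hsdef, bfun]; ring
  -- compute the Poisson bracket
  have hf := hasFDeriv_quadform14 ε u v z
  have hg := hasFDeriv_quadform14 σ w x z
  unfold pb
  rw [hf.fderiv, hg.fderiv]
  simp only [Phi14_q, Phi14_p]
  have step1 : ∀ j : Fin n,
      (qcoef14 ε u v z j - qcoef14 ε u v z (j - 1)) / 2 * (w j * x j)
        - u j * v j * ((qcoef14 σ w x z j - qcoef14 σ w x z (j - 1)) / 2)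
      = ((alF e u v j * (w j * x j) - alF s w x j * (u j * v j))
        - (alF e u v (j - 1) * (w j * x j) - alF s w x (j - 1) * (u j * v j))) / 2 := by
    intro j
    rw [hqc, hqc, hqs, hqs]
    ring
  rw [Finset.sum_congr rfl (fun j _ => step1 j), ← Finset.sum_div, Finset.sum_sub_distrib]
  have hshift : ∑ j : Fin n, (alF e u v (j-1) * (w j * x j) - alF s w x (j-1) * (u j * v j))
      = ∑ j : Fin n, (alF e u v j * (w (j+1) * x (j+1)) - alF s w x j * (u (j+1) * v (j+1))) := by
    rw [← shift_sum14 (fun j => alF e u v (j-1) * (w j * x j) - alF s w x (j-1) * (u j * v j))]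
    apply Finset.sum_congr rfl; intro j _
    simp [add_sub_cancel_right]
  rw [hshift, key]
  norm_num
end

section
/- Let ε, σ ∈ {−1, +1}^n with Π_{m=1}^n ε_m σ_m = +1, and fix a phase-space point z_* ∈ ℝ^{2n}, a real number λ, and vectors u, v, w, x ∈ ℝ^n satisfying L^ε(z_*)u = λu, L^ε(z_*)v = λv, L^σ(z_*)w = λw and L^σ(z_*)x = λx. Define f(z) = uᵀ L^ε(z) v and g(z) = wᵀ L^σ(z) x, let d_m = Π_{k=1}^{m−1} ε_k σ_k (so d_1 = 1), let D = diag(d_1, …, d_n), and for vectors a, c ∈ ℝ^n set S(a, c) = Σ_{m=1}^n d_m · b_m(z_*) · (ε_m a_{m+1} c_m − σ_m a_m c_{m+1}), with vector indices taken mod n. Then {f, g}(z_*) = (1/n)·[ (vᵀ D x)·S(u, w) + (uᵀ D w)·S(v, x) ]. -/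
open Matrix BigOperators

section Aux

open Matrix BigOperators

lemma my_dot_eq {n : ℕ} [NeZero n] (ε : Fin n → ℝ) (u v : Fin n → ℝ)
    (y : (Fin n → ℝ) × (Fin n → ℝ)) :
    u ⬝ᵥ (Leps ε y *ᵥ v) = (∑ r : Fin n, (u r * v r) * y.2 r)
      + ∑ r : Fin n, (ε r * (u r * v (r+1) + u (r+1) * v r)) * Real.exp ((y.1 r - y.1 (r+1))/2) := by
  simp only [dotProduct, mulVec, Leps, bfun, add_mul, Finset.mul_sum, Finset.sum_add_distrib,
    mul_ite, ite_mul, zero_mul, mul_zero]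
  simp only [Finset.sum_ite_eq, Finset.mem_univ, if_true]
  simp only [← eq_sub_iff_add_eq (c := (1 : Fin n)), Finset.sum_ite_eq',
    Finset.mem_univ, if_true]
  have h3 : ∑ r : Fin n, u r * (ε (r-1) * Real.exp ((y.1 (r-1) - y.1 (r-1+1)) / 2) * v (r-1))
      = ∑ r : Fin n, u (r+1) * (ε r * Real.exp ((y.1 r - y.1 (r+1)) / 2) * v r) :=
    (Fintype.sum_equiv (Equiv.addRight 1) _ _ (fun r => by simp)).symm
  simp only [mul_add, Finset.sum_add_distrib]
  rw [h3, add_assoc]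
  congr 1
  · exact Finset.sum_congr rfl (fun r _ => by ring)
  · rw [← Finset.sum_add_distrib]
    exact Finset.sum_congr rfl (fun r _ => by ring)

noncomputable def pj1 {n : ℕ} (r : Fin n) : ((Fin n → ℝ) × (Fin n → ℝ)) →L[ℝ] ℝ :=
  (ContinuousLinearMap.proj r).comp (ContinuousLinearMap.fst ℝ (Fin n → ℝ) (Fin n → ℝ))

noncomputable def pj2 {n : ℕ} (r : Fin n) : ((Fin n → ℝ) × (Fin n → ℝ)) →L[ℝ] ℝ :=
  (ContinuousLinearMap.proj r).comp (ContinuousLinearMap.snd ℝ (Fin n → ℝ) (Fin n → ℝ))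

lemma my_hasfd {n : ℕ} [NeZero n] (a c : Fin n → ℝ) (z : (Fin n → ℝ) × (Fin n → ℝ)) :
    HasFDerivAt (fun y : (Fin n → ℝ) × (Fin n → ℝ) =>
        (∑ r : Fin n, a r * y.2 r) + ∑ r : Fin n, c r * Real.exp ((y.1 r - y.1 (r+1))/2))
      ((∑ r : Fin n, a r • pj2 r) +
        ∑ r : Fin n, (c r * Real.exp ((z.1 r - z.1 (r+1))/2)) •
          ((2:ℝ)⁻¹ • (pj1 r - pj1 (r+1)))) z := by
  apply HasFDerivAt.add
  · apply HasFDerivAt.fun_sum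
    intro r _
    exact ((pj2 r).hasFDerivAt (x := z)).const_mul (a r)
  · apply HasFDerivAt.fun_sum
    intro r _
    have hl : HasFDerivAt (fun y : (Fin n → ℝ) × (Fin n → ℝ) => (y.1 r - y.1 (r+1))/2)
        ((2:ℝ)⁻¹ • (pj1 r - pj1 (r+1))) z := by
      have := ((2:ℝ)⁻¹ • (pj1 (n:=n) r - pj1 (r+1))).hasFDerivAt (x := z)
      convert this using 1
      funext y
      simp [pj1, div_eq_inv_mul]
    have := (hl.exp).const_mul (c r)
    convert this using 1
    · rfl
    rw [smul_smul, smul_smul, smul_smul, mul_assoc]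

lemma my_deriv_eval {n : ℕ} [NeZero n] (a c : Fin n → ℝ) (z h : (Fin n → ℝ) × (Fin n → ℝ)) :
    fderiv ℝ (fun y : (Fin n → ℝ) × (Fin n → ℝ) =>
        (∑ r : Fin n, a r * y.2 r) + ∑ r : Fin n, c r * Real.exp ((y.1 r - y.1 (r+1))/2)) z h
      = (∑ r : Fin n, a r * h.2 r) +
        ∑ r : Fin n, (c r * Real.exp ((z.1 r - z.1 (r+1))/2)) * ((h.1 r - h.1 (r+1))/2) := by
  rw [(my_hasfd a c z).fderiv]
  simp [pj1, pj2, div_eq_inv_mul, mul_comm, mul_assoc, mul_left_comm]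

lemma my_deriv_eval_p {n : ℕ} [NeZero n] (a c : Fin n → ℝ) (z : (Fin n → ℝ) × (Fin n → ℝ)) (j : Fin n) :
    fderiv ℝ (fun y : (Fin n → ℝ) × (Fin n → ℝ) =>
        (∑ r : Fin n, a r * y.2 r) + ∑ r : Fin n, c r * Real.exp ((y.1 r - y.1 (r+1))/2)) z
        (0, Pi.single j 1)
      = a j := by
  rw [my_deriv_eval]
  simp [Pi.single_apply, mul_ite, Finset.sum_ite_eq', Finset.mem_univ]

lemma my_deriv_eval_q {n : ℕ} [NeZero n] (a c : Fin n → ℝ) (z : (Fin n → ℝ) × (Fin n → ℝ)) (j : Fin n) :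
    fderiv ℝ (fun y : (Fin n → ℝ) × (Fin n → ℝ) =>
        (∑ r : Fin n, a r * y.2 r) + ∑ r : Fin n, c r * Real.exp ((y.1 r - y.1 (r+1))/2)) z
        (Pi.single j 1, 0)
      = c j * bfun z j / 2 - c (j-1) * bfun z (j-1) / 2 := by
  rw [my_deriv_eval]
  have h1 : ∀ r : Fin n, (r + 1 = j) = (r = j - 1) := by
    intro r; rw [eq_sub_iff_add_eq]
  simp only [Pi.single_apply, Pi.zero_apply, mul_zero, Finset.sum_const_zero, zero_add, h1]
  have h2 : ∀ r : Fin n, (c r * Real.exp ((z.1 r - z.1 (r+1))/2)) *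
      (((if r = j then (1:ℝ) else 0) - (if r = j - 1 then 1 else 0))/2)
      = (if r = j then c r * Real.exp ((z.1 r - z.1 (r+1))/2) / 2 else 0)
        - (if r = j - 1 then c r * Real.exp ((z.1 r - z.1 (r+1))/2) / 2 else 0) := by
    intro r; split <;> split <;> ring
  rw [Finset.sum_congr rfl (fun r _ => h2 r), Finset.sum_sub_distrib,
    Finset.sum_ite_eq' Finset.univ j, Finset.sum_ite_eq' Finset.univ (j-1)]
  simp [bfun]

lemma my_eig_comp {n : ℕ} [NeZero n] (ε : Fin n → ℝ) (z : (Fin n → ℝ) × (Fin n → ℝ))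
    (lam : ℝ) (u : Fin n → ℝ) (hu : Leps ε z *ᵥ u = lam • u) (j : Fin n) :
    z.2 j * u j + ε j * bfun z j * u (j+1) + ε (j-1) * bfun z (j-1) * u (j-1) = lam * u j := by
  have h := congrFun hu j
  simp only [mulVec, dotProduct, Leps, Pi.smul_apply, smul_eq_mul, add_mul, ite_mul, zero_mul,
    Finset.sum_add_distrib] at h
  simp only [Finset.sum_ite_eq, Finset.mem_univ, if_true] at h
  simp only [← eq_sub_iff_add_eq (c := (1 : Fin n)), Finset.sum_ite_eq',
    Finset.mem_univ, if_true] at h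
  rw [← h]

open Fin.NatCast in
lemma my_const_of_step {n : ℕ} [NeZero n] (P : Fin n → ℝ) (h : ∀ j, P (j+1) = P j) :
    ∀ j, P j = P 0 := by
  have key : ∀ k : ℕ, P (k : Fin n) = P 0 := by
    intro k
    induction k with
    | zero => simp
    | succ k ih => rw [show ((k+1 : ℕ) : Fin n) = (k : Fin n) + 1 by push_cast; ring, h, ih]
  intro j
  have := key j.val
  rwa [Fin.cast_val_eq_self] at this

lemma my_sum_shift {n : ℕ} [NeZero n] (F : Fin n → ℝ) :
    ∑ j : Fin n, F (j+1) = ∑ j : Fin n, F j :=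
  Fintype.sum_equiv (Equiv.addRight 1) _ _ (fun _ => rfl)

lemma my_prod_step {n : ℕ} (f : Fin n → ℝ) (j : Fin n) (m : ℕ) (hm : j.val < m)
    (hm2 : ∀ k : Fin n, k.val < m ↔ (k.val < j.val ∨ k = j)) :
    ∏ k : Fin n, (if k.val < m then f k else 1)
      = (∏ k : Fin n, if k.val < j.val then f k else 1) * f j := by
  have key : ∀ k : Fin n, (if k.val < m then f k else 1)
      = (if k.val < j.val then f k else 1) * (if k = j then f k else 1) := by
    intro k
    by_cases hk : k = j
    · subst hk; simp [hm, lt_irrefl]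
    · by_cases h2 : k.val < j.val
      · simp [h2, (hm2 k).2 (Or.inl h2), hk]
      · have : ¬ k.val < m := by rw [hm2]; tauto
        simp [h2, this, hk]
  rw [Finset.prod_congr rfl (fun k _ => key k), Finset.prod_mul_distrib,
    Finset.prod_ite_eq' Finset.univ j f]
  simp

lemma my_site_id (e s dj dj1 bj uj uj1 vj vj1 wj wj1 xj xj1 : ℝ)
    (he : e = 1 ∨ e = -1) (hs : s = 1 ∨ s = -1) (hdj : dj = 1 ∨ dj = -1)
    (hsucc : dj1 = dj*(e*s)) :
    bj/2*( (e*(uj*vj1+uj1*vj))*(wj*xj - wj1*xj1) - (s*(wj*xj1+wj1*xj))*(uj*vj - uj1*vj1) )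
    = (1/2)*( (vj*dj*xj + vj1*dj1*xj1) * (e*bj*(uj1*(dj*wj) - uj*(dj1*wj1)))
            + (uj*dj*wj + uj1*dj1*wj1) * (e*bj*(vj1*(dj*xj) - vj*(dj1*xj1))) ) := by
  subst hsucc
  rcases he with h|h <;> rcases hs with h'|h' <;> rcases hdj with h''|h'' <;>
    subst h h' h'' <;> ring

lemma my_sum_shift_combine {n : ℕ} [NeZero n] (c1 c2 E a1 a2 : Fin n → ℝ) :
    ∑ j : Fin n, ((c1 j * E j / 2 - c1 (j-1) * E (j-1) / 2) * a2 j
      - a1 j * (c2 j * E j / 2 - c2 (j-1) * E (j-1) / 2))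
    = ∑ j : Fin n, (E j / 2) * (c1 j * (a2 j - a2 (j+1)) - c2 j * (a1 j - a1 (j+1))) := by
  have h1 : ∑ j : Fin n, c1 (j-1) * E (j-1) / 2 * a2 j
      = ∑ j : Fin n, c1 j * E j / 2 * a2 (j+1) := by
    rw [← my_sum_shift (fun j => c1 (j-1) * E (j-1) / 2 * a2 j)]
    exact Finset.sum_congr rfl (fun j _ => by simp)
  have h2 : ∑ j : Fin n, a1 j * (c2 (j-1) * E (j-1) / 2)
      = ∑ j : Fin n, a1 (j+1) * (c2 j * E j / 2) := by
    rw [← my_sum_shift (fun j => a1 j * (c2 (j-1) * E (j-1) / 2))]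
    exact Finset.sum_congr rfl (fun j _ => by simp)
  have expand : ∀ j : Fin n, ((c1 j * E j / 2 - c1 (j-1) * E (j-1) / 2) * a2 j
      - a1 j * (c2 j * E j / 2 - c2 (j-1) * E (j-1) / 2))
      = ((c1 j * E j / 2 * a2 j - a1 j * (c2 j * E j / 2))
        - c1 (j-1) * E (j-1) / 2 * a2 j) + a1 j * (c2 (j-1) * E (j-1) / 2) :=
    fun j => by ring
  rw [Finset.sum_congr rfl (fun j _ => expand j), Finset.sum_add_distrib,
    Finset.sum_sub_distrib, h1, h2, ← Finset.sum_sub_distrib, ← Finset.sum_add_distrib]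
  exact Finset.sum_congr rfl (fun j _ => by ring)

end Aux

/-- the Poisson bracket of spectral components at a common
eigenvalue when Π ε_m σ_m = +1. -/
theorem stmt15 (n : ℕ) [NeZero n] (hn : 2 ≤ n) (ε σ : Fin n → ℝ)
    (hε : ∀ m, ε m = 1 ∨ ε m = -1) (hσ : ∀ m, σ m = 1 ∨ σ m = -1)
    (hprod : ∏ m : Fin n, ε m * σ m = 1)
    (z : (Fin n → ℝ) × (Fin n → ℝ)) (lam : ℝ) (u v w x : Fin n → ℝ)
    (hu : Leps ε z *ᵥ u = lam • u) (hv : Leps ε z *ᵥ v = lam • v)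
    (hw : Leps σ z *ᵥ w = lam • w) (hx : Leps σ z *ᵥ x = lam • x)
    (d : Fin n → ℝ)
    (hd : ∀ m : Fin n, d m = ∏ k : Fin n, if k.val < m.val then ε k * σ k else 1)
    (S : (Fin n → ℝ) → (Fin n → ℝ) → ℝ)
    (hS : ∀ a c : Fin n → ℝ, S a c = ∑ m : Fin n,
      d m * bfun z m * (ε m * a (m + 1) * c m - σ m * a m * c (m + 1))) :
    pb (fun y => u ⬝ᵥ (Leps ε y *ᵥ v)) (fun y => w ⬝ᵥ (Leps σ y *ᵥ x)) z =
      (1 / n) * ((∑ m : Fin n, v m * d m * x m) * S u w +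
        (∑ m : Fin n, u m * d m * w m) * S v x) := by
  -- basic sign facts
  have hnn : (n:ℝ) ≠ 0 := Nat.cast_ne_zero.mpr (NeZero.ne n)
  have he2 : ∀ j : Fin n, ε j * ε j = 1 := fun j => by
    rcases hε j with h|h <;> rw [h] <;> norm_num
  have hs2 : ∀ j : Fin n, σ j * σ j = 1 := fun j => by
    rcases hσ j with h|h <;> rw [h] <;> norm_num
  have hd0 : d 0 = 1 := by
    rw [hd]; exact Finset.prod_eq_one (fun k _ => by simp)
  have hdsucc : ∀ j : Fin n, d (j+1) = d j * (ε j * σ j) := by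
    intro j
    rcases Nat.lt_or_ge (j.val + 1) n with hj | hj
    · have hval : ((j+1 : Fin n)).val = j.val + 1 := by
        simp [Fin.add_def, Nat.mod_eq_of_lt hj]
      rw [hd (j+1), hd j, hval]
      exact my_prod_step (fun k => ε k * σ k) j (j.val + 1) (by omega)
        (fun k => by rw [Fin.ext_iff]; omega)
    · have hjn : j.val = n - 1 := by have := j.isLt; omega
      have hj1 : (j + 1 : Fin n) = 0 := by
        rw [Fin.ext_iff, Fin.add_def]
        simp [hjn, Nat.sub_add_cancel (Nat.one_le_iff_ne_zero.mpr (NeZero.ne n))]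
      rw [hj1, hd0, hd j]
      have := my_prod_step (fun k => ε k * σ k) j n (j.isLt)
        (fun k => by rw [Fin.ext_iff]; have := k.isLt; omega)
      rw [← this]
      rw [Finset.prod_congr rfl (fun k _ => if_pos k.isLt)]
      exact hprod.symm
  have hd2 : ∀ m : Fin n, d m * d m = 1 := by
    intro m
    rw [hd, ← Finset.prod_mul_distrib]
    apply Finset.prod_eq_one
    intro k _
    by_cases hc : k.val < m.val
    · simp only [if_pos hc]
      rcases hε k with h|h <;> rcases hσ k with h'|h' <;> rw [h, h'] <;> norm_num
    · simp [hc]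
  have hdval : ∀ m : Fin n, d m = 1 ∨ d m = -1 := fun m => mul_self_eq_one_iff.mp (hd2 m)
  have hA : ∀ j : Fin n, ε j * d (j+1) = d j * σ j := by
    intro j
    linear_combination ε j * hdsucc j + (d j * σ j) * he2 j
  have hB : ∀ j : Fin n, ε (j-1) * d (j-1) = d j * σ (j-1) := by
    intro j
    have hA' : ε (j-1) * d j = d (j-1) * σ (j-1) := by
      have := hA (j-1); rwa [sub_add_cancel] at this
    linear_combination (-(ε (j-1) * σ (j-1))) * hA' + (-(ε (j-1) * d (j-1))) * hs2 (j-1)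
      + (σ (j-1) * d j) * he2 (j-1)
  -- componentwise eigenvalue equations
  have eigU := my_eig_comp ε z lam u hu
  have eigV := my_eig_comp ε z lam v hv
  have eigW := my_eig_comp σ z lam w hw
  have eigX := my_eig_comp σ z lam x hx
  have eigW' : ∀ j : Fin n, z.2 j * (d j * w j) + ε j * bfun z j * (d (j+1) * w (j+1))
      + ε (j-1) * bfun z (j-1) * (d (j-1) * w (j-1)) = lam * (d j * w j) := by
    intro j
    linear_combination (d j) * eigW j + (bfun z j * w (j+1)) * hA j
      + (bfun z (j-1) * w (j-1)) * hB j
  have eigX' : ∀ j : Fin n, z.2 j * (d j * x j) + ε j * bfun z j * (d (j+1) * x (j+1))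
      + ε (j-1) * bfun z (j-1) * (d (j-1) * x (j-1)) = lam * (d j * x j) := by
    intro j
    linear_combination (d j) * eigX j + (bfun z j * x (j+1)) * hA j
      + (bfun z (j-1) * x (j-1)) * hB j
  -- the two Wronskian-type quantities and their constancy
  set P : Fin n → ℝ := fun j =>
    ε j * bfun z j * (u (j+1) * (d j * w j) - u j * (d (j+1) * w (j+1))) with hPdef
  set Q : Fin n → ℝ := fun j =>
    ε j * bfun z j * (v (j+1) * (d j * x j) - v j * (d (j+1) * x (j+1))) with hQdef
  have hPstep : ∀ j : Fin n, P (j+1) = P j := by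
    intro j
    have h1 := eigU (j+1)
    have h2 := eigW' (j+1)
    simp only [add_sub_cancel_right] at h1 h2
    simp only [hPdef]
    linear_combination (d (j+1) * w (j+1)) * h1 - u (j+1) * h2
  have hQstep : ∀ j : Fin n, Q (j+1) = Q j := by
    intro j
    have h1 := eigV (j+1)
    have h2 := eigX' (j+1)
    simp only [add_sub_cancel_right] at h1 h2
    simp only [hQdef]
    linear_combination (d (j+1) * x (j+1)) * h1 - v (j+1) * h2
  have hPc := my_const_of_step P hPstep
  have hQc := my_const_of_step Q hQstep
  -- rewrite S
  have hSuw : S u w = ∑ j : Fin n, P j := by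
    rw [hS]
    refine Finset.sum_congr rfl (fun m _ => ?_)
    simp only [hPdef]
    linear_combination (bfun z m * u m * w (m+1)) * hA m
  have hSvx : S v x = ∑ j : Fin n, Q j := by
    rw [hS]
    refine Finset.sum_congr rfl (fun m _ => ?_)
    simp only [hQdef]
    linear_combination (bfun z m * v m * x (m+1)) * hA m
  have hsumP : ∑ j : Fin n, P j = (n:ℝ) * P 0 := by
    rw [Finset.sum_congr rfl (fun j _ => hPc j)]
    simp [Finset.card_univ, nsmul_eq_mul]
  have hsumQ : ∑ j : Fin n, Q j = (n:ℝ) * Q 0 := by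
    rw [Finset.sum_congr rfl (fun j _ => hQc j)]
    simp [Finset.card_univ, nsmul_eq_mul]
  -- rewrite the Poisson bracket
  have hf : (fun y => u ⬝ᵥ (Leps ε y *ᵥ v)) = (fun y : (Fin n → ℝ) × (Fin n → ℝ) =>
      (∑ r : Fin n, (u r * v r) * y.2 r)
      + ∑ r : Fin n, (ε r * (u r * v (r+1) + u (r+1) * v r)) * Real.exp ((y.1 r - y.1 (r+1))/2)) :=
    funext (my_dot_eq ε u v)
  have hg : (fun y => w ⬝ᵥ (Leps σ y *ᵥ x)) = (fun y : (Fin n → ℝ) × (Fin n → ℝ) =>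
      (∑ r : Fin n, (w r * x r) * y.2 r)
      + ∑ r : Fin n, (σ r * (w r * x (r+1) + w (r+1) * x r)) * Real.exp ((y.1 r - y.1 (r+1))/2)) :=
    funext (my_dot_eq σ w x)
  rw [hf, hg]
  simp only [pb, my_deriv_eval_q, my_deriv_eval_p]
  rw [my_sum_shift_combine (fun j => ε j * (u j * v (j+1) + u (j+1) * v j))
    (fun j => σ j * (w j * x (j+1) + w (j+1) * x j)) (fun j => bfun z j)
    (fun j => u j * v j) (fun j => w j * x j)]
  -- per-site identity and resummation
  have persite : ∀ j : Fin n,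
      (bfun z j / 2) * ((ε j * (u j * v (j+1) + u (j+1) * v j)) * (w j * x j - w (j+1) * x (j+1))
        - (σ j * (w j * x (j+1) + w (j+1) * x j)) * (u j * v j - u (j+1) * v (j+1)))
      = (1/2) * ((v j * d j * x j * P 0 + u j * d j * w j * Q 0)
        + (v (j+1) * d (j+1) * x (j+1) * P 0 + u (j+1) * d (j+1) * w (j+1) * Q 0)) := by
    intro j
    have h := my_site_id (ε j) (σ j) (d j) (d (j+1)) (bfun z j) (u j) (u (j+1)) (v j) (v (j+1))
      (w j) (w (j+1)) (x j) (x (j+1)) (hε j) (hσ j) (hdval j) (hdsucc j)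
    have hp : P j = P 0 := hPc j
    have hq : Q j = Q 0 := hQc j
    simp only [hPdef, hQdef] at hp hq
    linear_combination h + ((1:ℝ)/2) * (v j * d j * x j + v (j+1) * d (j+1) * x (j+1)) * hp
      + ((1:ℝ)/2) * (u j * d j * w j + u (j+1) * d (j+1) * w (j+1)) * hq
  rw [Finset.sum_congr rfl (fun j _ => persite j)]
  have hshift : ∑ j : Fin n,
      (v (j+1) * d (j+1) * x (j+1) * P 0 + u (j+1) * d (j+1) * w (j+1) * Q 0)
      = ∑ j : Fin n, (v j * d j * x j * P 0 + u j * d j * w j * Q 0) :=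
    my_sum_shift (fun j => v j * d j * x j * P 0 + u j * d j * w j * Q 0)
  have hhalf : ∑ j : Fin n, (1/2 : ℝ) * ((v j * d j * x j * P 0 + u j * d j * w j * Q 0)
        + (v (j+1) * d (j+1) * x (j+1) * P 0 + u (j+1) * d (j+1) * w (j+1) * Q 0))
      = ∑ j : Fin n, (v j * d j * x j * P 0 + u j * d j * w j * Q 0) := by
    rw [Finset.sum_congr rfl (fun j _ => mul_add (1/2 : ℝ) _ _), Finset.sum_add_distrib,
      ← Finset.mul_sum, ← Finset.mul_sum, hshift]
    ring
  rw [hhalf, hSuw, hSvx, hsumP, hsumQ, Finset.sum_add_distrib, ← Finset.sum_mul,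
    ← Finset.sum_mul]
  field_simp
end

section
/- Fix a phase-space point z_* ∈ ℝ^{2n}, a real number λ, and orthonormal vectors u, v ∈ ℝ^n with L(z_*)u = λu and L(z_*)v = λv. Then the quantity W_m = b_m(z_*)·(u_{m+1} v_m − u_m v_{m+1}) (vector indices mod n) is independent of m ∈ {1, …, n}, and its common value is nonzero. -/
open Matrix BigOperators

lemma lax_mulVec {n : ℕ} [NeZero n] (z : (Fin n → ℝ) × (Fin n → ℝ)) (w : Fin n → ℝ)
    (r : Fin n) :
    (Lax z *ᵥ w) r = z.2 r * w r + bfun z r * w (r + 1) + bfun z (r - 1) * w (r - 1) := by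
  have hcond : ∀ s : Fin n, (s + 1 = r) = (r - 1 = s) := by
    intro s
    apply propext
    constructor
    · intro h; rw [← h]; open Fin.CommRing in ring
    · intro h; rw [← h]; open Fin.CommRing in ring
  simp only [mulVec, dotProduct, Lax, add_mul, ite_mul, zero_mul, Finset.sum_add_distrib, hcond]
  rw [Finset.sum_ite_eq, Finset.sum_ite_eq, Finset.sum_ite_eq]
  simp


/-- the Wronskian-like quantity W_m = b_m (u_{m+1}v_m − u_m v_{m+1})
is independent of m and nonzero, for orthonormal eigenvectors u, v of L(z) with
a common eigenvalue. -/
theorem stmt16 (n : ℕ) [NeZero n] (hn : 2 ≤ n) (z : (Fin n → ℝ) × (Fin n → ℝ))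
    (lam : ℝ) (u v : Fin n → ℝ)
    (hu : Lax z *ᵥ u = lam • u) (hv : Lax z *ᵥ v = lam • v)
    (huu : u ⬝ᵥ u = 1) (hvv : v ⬝ᵥ v = 1) (huv : u ⬝ᵥ v = 0) :
    (∀ m m' : Fin n,
      bfun z m * (u (m + 1) * v m - u m * v (m + 1)) =
        bfun z m' * (u (m' + 1) * v m' - u m' * v (m' + 1))) ∧
    (∀ m : Fin n, bfun z m * (u (m + 1) * v m - u m * v (m + 1)) ≠ 0) := by
  have hL : ∀ (w : Fin n → ℝ), Lax z *ᵥ w = lam • w →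
      ∀ r : Fin n, z.2 r * w r + bfun z r * w (r + 1) + bfun z (r - 1) * w (r - 1)
        = lam * w r := by
    intro w hw r
    have := congrFun hw r
    rwa [lax_mulVec] at this
  have hU := hL u hu
  have hV := hL v hv
  set W : Fin n → ℝ := fun m => bfun z m * (u (m + 1) * v m - u m * v (m + 1)) with hWdef
  have hstep : ∀ m : Fin n, W (m + 1) = W m := by
    intro m
    have h1 := hU (m + 1)
    have h2 := hV (m + 1)
    rw [add_sub_cancel_right] at h1 h2
    simp only [hWdef]
    linear_combination v (m + 1) * h1 - u (m + 1) * h2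
  open Fin.NatCast Fin.CommRing in
  have hnat : ∀ k : ℕ, W (k : Fin n) = W 0 := by
    intro k
    induction k with
    | zero => norm_num
    | succ k ih => rw [Nat.cast_succ, hstep, ih]
  have hconst : ∀ m m' : Fin n, W m = W m' := by
    intro m m'
    have h1 : W m = W 0 := by rw [← Fin.cast_val_eq_self m]; exact hnat m.val
    have h2 : W m' = W 0 := by rw [← Fin.cast_val_eq_self m']; exact hnat m'.val
    rw [h1, h2]
  refine ⟨hconst, ?_⟩
  intro m hm
  have hbne : ∀ j : Fin n, bfun z j ≠ 0 := fun j => (Real.exp_pos _).ne'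
  obtain ⟨m0, hm0⟩ : ∃ j, v j ≠ 0 := by
    by_contra h
    push_neg at h
    simp [dotProduct, h] at hvv
  have h0 : W m0 = 0 := (hconst m0 m).trans hm
  set w : Fin n → ℝ := fun j => v m0 * u j - u m0 * v j with hwdef
  have hWeq : ∀ r : Fin n, z.2 r * w r + bfun z r * w (r + 1) + bfun z (r - 1) * w (r - 1)
      = lam * w r := by
    intro r
    simp only [hwdef]
    linear_combination v m0 * hU r - u m0 * hV r
  have hw0 : w m0 = 0 := by simp only [hwdef]; ring
  have hw1 : w (m0 + 1) = 0 := by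
    have h0' : bfun z m0 * (u (m0 + 1) * v m0 - u m0 * v (m0 + 1)) = 0 := h0
    have hz : u (m0 + 1) * v m0 - u m0 * v (m0 + 1) = 0 :=
      (mul_eq_zero.mp h0').resolve_left (hbne m0)
    simp only [hwdef]
    linear_combination hz
  open Fin.NatCast Fin.CommRing in
  have hall : ∀ k : ℕ, w (m0 + k) = 0 ∧ w (m0 + k + 1) = 0 := by
    intro k
    induction k with
    | zero => simpa using ⟨hw0, hw1⟩
    | succ k ih =>
      obtain ⟨h1, h2⟩ := ih
      have heq := hWeq (m0 + k + 1)
      rw [add_sub_cancel_right] at heq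
      have h3 : w (m0 + k + 1 + 1) = 0 := by
        have hmul : bfun z (m0 + k + 1) * w (m0 + k + 1 + 1) = 0 := by
          linear_combination heq + (lam - z.2 (m0 + k + 1)) * h2 - bfun z (m0 + k) * h1
        exact (mul_eq_zero.mp hmul).resolve_left (hbne _)
      constructor
      · rw [Nat.cast_succ, ← add_assoc]; exact h2
      · rw [Nat.cast_succ, ← add_assoc]; exact h3
  open Fin.NatCast Fin.CommRing in
  have hzero : ∀ j : Fin n, w j = 0 := by
    intro j
    have h := (hall ((j - m0).val)).1
    have e : m0 + ((j - m0).val : Fin n) = j := by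
      rw [Fin.cast_val_eq_self]; ring
    rwa [e] at h
  have key : ∀ c : Fin n → ℝ, v m0 * (∑ j, u j * c j) - u m0 * (∑ j, v j * c j) = 0 := by
    intro c
    have hs : ∑ j, w j * c j = 0 :=
      Finset.sum_eq_zero fun j _ => by rw [hzero j, zero_mul]
    calc v m0 * (∑ j, u j * c j) - u m0 * (∑ j, v j * c j) = ∑ j, w j * c j := by
          rw [Finset.mul_sum, Finset.mul_sum, ← Finset.sum_sub_distrib]
          exact Finset.sum_congr rfl fun j _ => by simp only [hwdef]; ring
      _ = 0 := hs
  have huv' : (∑ j, v j * u j) = 0 := by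
    have := dotProduct_comm u v
    rw [huv] at this
    simpa [dotProduct] using this.symm
  have h1 := key v
  have h2 := key u
  simp only [dotProduct] at huu hvv huv
  rw [huv, hvv] at h1
  rw [huu, huv'] at h2
  apply hm0
  linarith
end

section
/- Fix a phase-space point z_* ∈ ℝ^{2n}, a real number λ, and orthonormal vectors u, v ∈ ℝ^n with L(z_*)u = λu and L(z_*)v = λv. Define smooth functions ξ, η : ℝ^{2n} → ℝ by ξ(z) = ½·(uᵀ L(z) u − vᵀ L(z) v) and η(z) = vᵀ L(z) u. Then the Poisson bracket {ξ, η} at z_* equals (1/n)·Σ_{m=1}^n b_m(z_*)·(u_{m+1} v_m − u_m v_{m+1}) (vector indices mod n), and this value is nonzero. In particular, ξ and η form a (rescaled) canonically conjugate pair transverse to the singular set at z_*. -/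
open Matrix BigOperators

lemma sum_shift {n : ℕ} [NeZero n] (f : Fin n → ℝ) :
    ∑ r : Fin n, f (r + 1) = ∑ r : Fin n, f r :=
  Fintype.sum_equiv (Equiv.addRight 1) _ _ (fun _ => rfl)

lemma sum_shift' {n : ℕ} [NeZero n] (f : Fin n → ℝ) :
    ∑ r : Fin n, f (r - 1) = ∑ r : Fin n, f r :=
  Fintype.sum_equiv (Equiv.subRight 1) _ _ (fun _ => rfl)

lemma mulVec_apply {n : ℕ} [NeZero n] (z : (Fin n → ℝ) × (Fin n → ℝ)) (x : Fin n → ℝ)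
    (m : Fin n) :
    (Lax z *ᵥ x) m = z.2 m * x m + bfun z m * x (m + 1) + bfun z (m - 1) * x (m - 1) := by
  have h3 : ∀ s : Fin n, (s + 1 = m) = (s = m - 1) := fun s => propext eq_sub_iff_add_eq.symm
  simp only [Matrix.mulVec, dotProduct, Lax, add_mul, Finset.sum_add_distrib,
    ite_mul, zero_mul, h3]
  rw [Finset.sum_ite_eq Finset.univ m (fun s => z.2 m * x s),
    Finset.sum_ite_eq Finset.univ (m + 1) (fun s => bfun z m * x s),
    Finset.sum_ite_eq' Finset.univ (m - 1) (fun s => bfun z s * x s)]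
  simp

lemma quadform {n : ℕ} [NeZero n] (y : (Fin n → ℝ) × (Fin n → ℝ)) (a b : Fin n → ℝ) :
    a ⬝ᵥ (Lax y *ᵥ b) =
      ∑ r : Fin n, (a r * b r * y.2 r + (a r * b (r + 1) + a (r + 1) * b r) * bfun y r) := by
  simp only [dotProduct, _root_.mulVec_apply]
  rw [show (∑ r : Fin n, a r * (y.2 r * b r + bfun y r * b (r+1) + bfun y (r-1) * b (r-1)))
      = (∑ r : Fin n, (a r * b r * y.2 r + a r * b (r+1) * bfun y r))
        + ∑ r : Fin n, a r * b (r-1) * bfun y (r-1) by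
    rw [← Finset.sum_add_distrib]; exact Finset.sum_congr rfl fun r _ => by ring]
  rw [show (∑ r : Fin n, a r * b (r-1) * bfun y (r-1))
      = ∑ r : Fin n, a (r+1) * b r * bfun y r from
    (Finset.sum_congr rfl fun r _ =>
        show a r * b (r-1) * bfun y (r-1)
          = (fun s => a (s+1) * b s * bfun y s) (r - 1) by
          simp only []; rw [sub_add_cancel]).trans
      (sum_shift' (fun s => a (s+1) * b s * bfun y s))]
  rw [← Finset.sum_add_distrib]
  exact Finset.sum_congr rfl fun r _ => by ring

section deriv
variable {n : ℕ} [NeZero n]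

noncomputable def Pq (r : Fin n) : ((Fin n → ℝ) × (Fin n → ℝ)) →L[ℝ] ℝ :=
  (ContinuousLinearMap.proj r).comp (ContinuousLinearMap.fst ℝ (Fin n → ℝ) (Fin n → ℝ))

noncomputable def Pp (r : Fin n) : ((Fin n → ℝ) × (Fin n → ℝ)) →L[ℝ] ℝ :=
  (ContinuousLinearMap.proj r).comp (ContinuousLinearMap.snd ℝ (Fin n → ℝ) (Fin n → ℝ))

lemma Pq_apply (r : Fin n) (w : (Fin n → ℝ) × (Fin n → ℝ)) : Pq r w = w.1 r := rfl

lemma Pp_apply (r : Fin n) (w : (Fin n → ℝ) × (Fin n → ℝ)) : Pp r w = w.2 r := rfl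

noncomputable def ell (r : Fin n) : ((Fin n → ℝ) × (Fin n → ℝ)) →L[ℝ] ℝ :=
  (1/2 : ℝ) • (Pq r - Pq (r + 1))

lemma ell_apply (r : Fin n) (w : (Fin n → ℝ) × (Fin n → ℝ)) :
    ell r w = (w.1 r - w.1 (r + 1)) / 2 := by
  simp only [ell, ContinuousLinearMap.smul_apply, ContinuousLinearMap.sub_apply,
    Pq_apply, smul_eq_mul]
  ring

lemma bfun_hasFDerivAt (r : Fin n) (z : (Fin n → ℝ) × (Fin n → ℝ)) :
    HasFDerivAt (fun y => bfun y r) (bfun z r • ell r) z := by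
  have h : (fun y : (Fin n → ℝ) × (Fin n → ℝ) => bfun y r) = fun y => Real.exp (ell r y) := by
    funext y; rw [ell_apply]; rfl
  have h2 : bfun z r = Real.exp (ell r z) := by rw [ell_apply]; rfl
  rw [h, h2]
  exact (ell r).hasFDerivAt.exp

noncomputable def Dtot (A B : Fin n → ℝ) (z : (Fin n → ℝ) × (Fin n → ℝ)) :
    ((Fin n → ℝ) × (Fin n → ℝ)) →L[ℝ] ℝ :=
  ∑ r : Fin n, (A r • Pp r + (B r * bfun z r) • ell r)

lemma G_hasFDerivAt (A B : Fin n → ℝ) (z : (Fin n → ℝ) × (Fin n → ℝ)) :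
    HasFDerivAt (fun y => ∑ r : Fin n, (A r * y.2 r + B r * bfun y r)) (Dtot A B z) z := by
  apply HasFDerivAt.fun_sum
  intro r _
  have h1 : HasFDerivAt (fun y : (Fin n → ℝ) × (Fin n → ℝ) => A r * y.2 r) (A r • Pp r) z :=
    (Pp r).hasFDerivAt.const_mul (A r)
  have h2 : HasFDerivAt (fun y : (Fin n → ℝ) × (Fin n → ℝ) => B r * bfun y r)
      ((B r * bfun z r) • ell r) z := by
    have := (bfun_hasFDerivAt r z).const_mul (B r)
    rwa [smul_smul] at this
  exact h1.add h2

lemma Dtot_apply (A B : Fin n → ℝ) (z w : (Fin n → ℝ) × (Fin n → ℝ)) :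
    Dtot A B z w =
      ∑ r : Fin n, (A r * w.2 r + B r * bfun z r * ((w.1 r - w.1 (r + 1)) / 2)) := by
  simp only [Dtot, ContinuousLinearMap.sum_apply, ContinuousLinearMap.add_apply,
    ContinuousLinearMap.smul_apply, Pp_apply, ell_apply, smul_eq_mul]

lemma Dtot_q (A B : Fin n → ℝ) (z : (Fin n → ℝ) × (Fin n → ℝ)) (j : Fin n) :
    Dtot A B z (Pi.single j 1, 0) =
      (B j * bfun z j - B (j - 1) * bfun z (j - 1)) / 2 := by
  have h3 : ∀ s : Fin n, (s = j - 1) = (s + 1 = j) := fun s => propext eq_sub_iff_add_eq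
  rw [Dtot_apply]
  have key : ∀ r : Fin n, A r * (0 : Fin n → ℝ) r +
      B r * bfun z r * (((Pi.single j 1 : Fin n → ℝ) r - (Pi.single j 1 : Fin n → ℝ) (r + 1)) / 2)
      = (if r = j then B r * bfun z r / 2 else 0) - (if r = j - 1 then B r * bfun z r / 2 else 0) := by
    intro r
    have e1 : (Pi.single j 1 : Fin n → ℝ) r = if r = j then 1 else 0 := Pi.single_apply j 1 r
    have e2 : (Pi.single j 1 : Fin n → ℝ) (r + 1) = if r = j - 1 then 1 else 0 := by
      exact (Pi.single_apply j 1 (r+1)).trans (if_congr eq_sub_iff_add_eq.symm rfl rfl)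
    rw [e1, e2]
    simp only [Pi.zero_apply, mul_zero, zero_add]
    split_ifs <;> ring
  rw [Finset.sum_congr rfl (fun r _ => key r), Finset.sum_sub_distrib,
    Finset.sum_ite_eq' Finset.univ j (fun r => B r * bfun z r / 2),
    Finset.sum_ite_eq' Finset.univ (j - 1) (fun r => B r * bfun z r / 2)]
  simp; ring

lemma Dtot_p (A B : Fin n → ℝ) (z : (Fin n → ℝ) × (Fin n → ℝ)) (j : Fin n) :
    Dtot A B z (0, Pi.single j 1) = A j := by
  rw [Dtot_apply]
  simp only [Pi.zero_apply, sub_self, zero_div, mul_zero, add_zero,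
    Pi.single_apply, mul_ite, mul_one]
  rw [Finset.sum_ite_eq' Finset.univ j (fun r => A r)]
  simp

end deriv

section wr
variable {n : ℕ} [NeZero n] (z : (Fin n → ℝ) × (Fin n → ℝ)) (lam : ℝ)

lemma eigen_rec {x : Fin n → ℝ} (hx : Lax z *ᵥ x = lam • x) (m : Fin n) :
    z.2 m * x m + bfun z m * x (m + 1) + bfun z (m - 1) * x (m - 1) = lam * x m := by
  have := congrFun hx m
  rw [_root_.mulVec_apply] at this
  simpa using this

variable {z lam}

lemma wr_step {u v : Fin n → ℝ} (hu : Lax z *ᵥ u = lam • u) (hv : Lax z *ᵥ v = lam • v)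
    (m : Fin n) :
    bfun z m * (u (m + 1) * v m - u m * v (m + 1)) =
      bfun z (m - 1) * (u (m - 1 + 1) * v (m - 1) - u (m - 1) * v (m - 1 + 1)) := by
  have e : m - 1 + 1 = m := sub_add_cancel m 1
  rw [e]
  linear_combination v m * eigen_rec z lam hu m - u m * eigen_rec z lam hv m

open Fin.NatCast in
lemma wr_const {u v : Fin n → ℝ} (hu : Lax z *ᵥ u = lam • u) (hv : Lax z *ᵥ v = lam • v)
    (m : Fin n) :
    bfun z m * (u (m + 1) * v m - u m * v (m + 1)) =
      bfun z 0 * (u (0 + 1) * v 0 - u 0 * v (0 + 1)) := by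
  set W : Fin n → ℝ := fun m => bfun z m * (u (m + 1) * v m - u m * v (m + 1)) with hW
  have step : ∀ m : Fin n, W m = W (m - 1) := fun m => wr_step hu hv m
  have key : ∀ k : ℕ, W (k : Fin n) = W 0 := by
    intro k
    induction k with
    | zero => norm_num
    | succ k ih =>
      rw [step ((k + 1 : ℕ) : Fin n)]
      have e : ((k + 1 : ℕ) : Fin n) - 1 = (k : ℕ) := by push_cast; abel
      rw [e, ih]
  have := key m.val
  rwa [Fin.cast_val_eq_self m] at this

open Fin.NatCast in
lemma propagate (w : Fin n → ℝ)
    (hw : ∀ m, z.2 m * w m + bfun z m * w (m + 1) + bfun z (m - 1) * w (m - 1) = lam * w m)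
    (m0 : Fin n) (h0 : w m0 = 0) (h1 : w (m0 + 1) = 0) : ∀ m, w m = 0 := by
  have key : ∀ k : ℕ, w (m0 + (k : Fin n)) = 0 ∧ w (m0 + (k : Fin n) + 1) = 0 := by
    intro k
    induction k with
    | zero => simpa using ⟨h0, h1⟩
    | succ k ih =>
      obtain ⟨ha, hb⟩ := ih
      have e1 : m0 + ((k + 1 : ℕ) : Fin n) = m0 + (k : Fin n) + 1 := by push_cast; abel
      refine ⟨by rw [e1]; exact hb, ?_⟩
      have hrec := hw (m0 + (k : Fin n) + 1)
      have e2 : m0 + (k : Fin n) + 1 - 1 = m0 + (k : Fin n) := by abel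
      rw [e2, ha, hb, mul_zero, mul_zero, mul_zero, zero_add, add_zero] at hrec
      have hbne : bfun z (m0 + (k : Fin n) + 1) ≠ 0 := (Real.exp_pos _).ne'
      have := mul_eq_zero.mp hrec
      rw [e1]
      tauto
  intro m
  have := (key (m - m0).val).1
  rwa [Fin.cast_val_eq_self (m - m0), add_sub_cancel] at this

end wr

lemma sum_split {n : ℕ} [NeZero n] (φ ψ : Fin n → ℝ) :
    ∑ j : Fin n, (φ j - ψ (j - 1)) = ∑ j : Fin n, (φ j - ψ j) := by
  rw [Finset.sum_sub_distrib, Finset.sum_sub_distrib, sum_shift' ψ]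


/-- {ξ,η}(z_*) = (1/n) Σ_m b_m (u_{m+1}v_m − u_m v_{m+1}) ≠ 0 for
ξ = ½(uᵀLu − vᵀLv), η = vᵀLu. -/
theorem stmt17 (n : ℕ) [NeZero n] (hn : 2 ≤ n) (z : (Fin n → ℝ) × (Fin n → ℝ))
    (lam : ℝ) (u v : Fin n → ℝ)
    (hu : Lax z *ᵥ u = lam • u) (hv : Lax z *ᵥ v = lam • v)
    (huu : u ⬝ᵥ u = 1) (hvv : v ⬝ᵥ v = 1) (huv : u ⬝ᵥ v = 0) :
    pb (fun y => (1 / 2) * (u ⬝ᵥ (Lax y *ᵥ u) - v ⬝ᵥ (Lax y *ᵥ v)))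
        (fun y => v ⬝ᵥ (Lax y *ᵥ u)) z =
      (1 / n) * ∑ m : Fin n, bfun z m * (u (m + 1) * v m - u m * v (m + 1)) ∧
    (1 / n) * ∑ m : Fin n, bfun z m * (u (m + 1) * v m - u m * v (m + 1)) ≠ 0 := by
  have huu' : ∑ r : Fin n, u r * u r = 1 := huu
  have hvv' : ∑ r : Fin n, v r * v r = 1 := hvv
  have huv' : ∑ r : Fin n, u r * v r = 0 := huv
  set W0 : ℝ := bfun z 0 * (u (0 + 1) * v 0 - u 0 * v (0 + 1)) with hW0
  have hWm : ∀ m : Fin n, bfun z m * (u (m + 1) * v m - u m * v (m + 1)) = W0 :=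
    fun m => wr_const hu hv m
  have hnR : (n : ℝ) ≠ 0 := Nat.cast_ne_zero.mpr (NeZero.ne n)
  have hsumW : ∑ m : Fin n, bfun z m * (u (m + 1) * v m - u m * v (m + 1)) = n * W0 := by
    rw [Finset.sum_congr rfl fun m _ => hWm m, Finset.sum_const, Finset.card_univ,
      Fintype.card_fin, nsmul_eq_mul]
  have hRHS : (1 / n : ℝ) * ∑ m : Fin n, bfun z m * (u (m + 1) * v m - u m * v (m + 1))
      = W0 := by rw [hsumW]; field_simp
  constructor
  · -- main computation
    rw [hRHS]
    set Axi : Fin n → ℝ := fun r => (u r * u r - v r * v r) / 2 with hAxi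
    set Bxi : Fin n → ℝ := fun r => u r * u (r + 1) - v r * v (r + 1) with hBxi
    set Aeta : Fin n → ℝ := fun r => v r * u r with hAeta
    set Beta : Fin n → ℝ := fun r => v r * u (r + 1) + v (r + 1) * u r with hBeta
    have hxi : (fun y => (1 / 2) * (u ⬝ᵥ (Lax y *ᵥ u) - v ⬝ᵥ (Lax y *ᵥ v)))
        = fun y : (Fin n → ℝ) × (Fin n → ℝ) =>
            ∑ r : Fin n, (Axi r * y.2 r + Bxi r * bfun y r) := by
      funext y
      rw [quadform, quadform, ← Finset.sum_sub_distrib, Finset.mul_sum]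
      all_goals exact Finset.sum_congr rfl fun r _ => by simp only [hAxi, hBxi]; ring
    have heta : (fun y => v ⬝ᵥ (Lax y *ᵥ u))
        = fun y : (Fin n → ℝ) × (Fin n → ℝ) =>
            ∑ r : Fin n, (Aeta r * y.2 r + Beta r * bfun y r) := by
      funext y
      rw [quadform]
      all_goals exact Finset.sum_congr rfl fun r _ => by simp only [hAeta, hBeta]; ring
    have dxi : fderiv ℝ (fun y => (1 / 2) * (u ⬝ᵥ (Lax y *ᵥ u) - v ⬝ᵥ (Lax y *ᵥ v))) z
        = Dtot Axi Bxi z := by rw [hxi]; exact (G_hasFDerivAt Axi Bxi z).fderiv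
    have deta : fderiv ℝ (fun y => v ⬝ᵥ (Lax y *ᵥ u)) z = Dtot Aeta Beta z := by
      rw [heta]; exact (G_hasFDerivAt Aeta Beta z).fderiv
    unfold pb
    simp only [dxi, deta, Dtot_q, Dtot_p]
    have step1 : ∑ j : Fin n,
        ((Bxi j * bfun z j - Bxi (j - 1) * bfun z (j - 1)) / 2 * Aeta j -
          Axi j * ((Beta j * bfun z j - Beta (j - 1) * bfun z (j - 1)) / 2))
        = ∑ j : Fin n,
          ((fun m => (Bxi m * bfun z m * Aeta m - Axi m * (Beta m * bfun z m)) / 2) j -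
           (fun m => (Bxi m * bfun z m * Aeta (m + 1) - Axi (m + 1) * (Beta m * bfun z m)) / 2)
             (j - 1)) := by
      refine Finset.sum_congr rfl fun j _ => ?_
      simp only []
      rw [sub_add_cancel]
      ring
    rw [step1, sum_split
      (fun m => (Bxi m * bfun z m * Aeta m - Axi m * (Beta m * bfun z m)) / 2)
      (fun m => (Bxi m * bfun z m * Aeta (m + 1) - Axi (m + 1) * (Beta m * bfun z m)) / 2)]
    have step2 : ∀ j : Fin n,
        (Bxi j * bfun z j * Aeta j - Axi j * (Beta j * bfun z j)) / 2 -
          (Bxi j * bfun z j * Aeta (j + 1) - Axi (j + 1) * (Beta j * bfun z j)) / 2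
        = (1 / 4) * W0 * (u j * u j + u (j + 1) * u (j + 1) + v j * v j
            + v (j + 1) * v (j + 1)) := by
      intro j
      rw [← hWm j]
      simp only [hAxi, hBxi, hAeta, hBeta]
      ring
    have final : ∑ j : Fin n,
        ((Bxi j * bfun z j * Aeta j - Axi j * (Beta j * bfun z j)) / 2 -
          (Bxi j * bfun z j * Aeta (j + 1) - Axi (j + 1) * (Beta j * bfun z j)) / 2) = W0 := by
      rw [Finset.sum_congr rfl fun j _ => step2 j, ← Finset.mul_sum,
        Finset.sum_add_distrib, Finset.sum_add_distrib, Finset.sum_add_distrib,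
        sum_shift (fun r => u r * u r), sum_shift (fun r => v r * v r), huu', hvv']
      ring
    exact final
  · -- nonvanishing
    rw [hRHS]
    intro hW0zero
    have hWall : ∀ m : Fin n, bfun z m * (u (m + 1) * v m - u m * v (m + 1)) = 0 :=
      fun m => (hWm m).trans hW0zero
    have hune : ∃ m0 : Fin n, u m0 ≠ 0 := by
      by_contra h
      push_neg at h
      rw [Finset.sum_congr rfl fun r _ => by rw [h r, zero_mul]] at huu'
      simp at huu'
    obtain ⟨m0, hm0⟩ := hune
    set t : ℝ := v m0 / u m0 with ht
    set w : Fin n → ℝ := fun m => v m - t * u m with hw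
    have hwrec : ∀ m, z.2 m * w m + bfun z m * w (m + 1) + bfun z (m - 1) * w (m - 1)
        = lam * w m := by
      intro m
      simp only [hw]
      linear_combination eigen_rec z lam hv m - t * eigen_rec z lam hu m
    have hw0 : w m0 = 0 := by simp only [hw, ht]; field_simp; ring
    have hw1 : w (m0 + 1) = 0 := by
      have := hWall m0
      have hb : bfun z m0 ≠ 0 := (Real.exp_pos _).ne'
      have h2 : u (m0 + 1) * v m0 - u m0 * v (m0 + 1) = 0 := by
        rcases mul_eq_zero.mp this with h | h
        · exact absurd h hb
        · exact h
      simp only [hw, ht]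
      field_simp
      linear_combination -h2
    have hweq : ∀ m, w m = 0 := propagate w hwrec m0 hw0 hw1
    have hveq : ∀ m, v m = t * u m := by
      intro m
      have := hweq m
      simp only [hw] at this
      linarith
    have : (0 : ℝ) = t := by
      rw [← huv', Finset.sum_congr rfl fun r _ => by rw [hveq r]]
      rw [show ∑ r : Fin n, u r * (t * u r) = t * ∑ r : Fin n, u r * u r by
        rw [Finset.mul_sum]; exact Finset.sum_congr rfl fun r _ => by ring]
      rw [huu', mul_one]
    have hv0 : ∀ m, v m = 0 := fun m => by rw [hveq m, ← this, zero_mul]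
    rw [Finset.sum_congr rfl fun r _ => by rw [hv0 r, mul_zero]] at hvv'
    simp at hvv'
end

section
/- Fix a phase-space point z ∈ ℝ^{2n} and a vector c ∈ ℝ^n. If Σ_{j=1}^n c_j L(z)^{j−1} = 0 (the zero n×n matrix), then Σ_{j=1}^n c_j dF_j(z) = 0 as a linear functional on ℝ^{2n}; that is, any polynomial of degree at most n−1 annihilating L(z) gives a linear relation among the differentials of the integrals F_1, …, F_n at z. The same implication holds with L̄ in place of L. -/
open Matrix BigOperators

set_option linter.unusedSectionVars false
set_option maxHeartbeats 1000000

open Finset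
set_option linter.unusedSectionVars false

namespace TodaAux
variable {n : ℕ} [NeZero n]

/-- cyclic index -/
def bb (b : Fin n → ℝ) (t : ℕ) : ℝ :=
  b ⟨t % n, Nat.mod_lt t (Nat.pos_of_ne_zero (NeZero.ne n))⟩

noncomputable def Nmat (p b : Fin n → ℝ) : Matrix (Fin n) (Fin n) ℝ :=
  Matrix.of fun i j =>
    (if i = j then p i else 0) + (if i.val + 1 = j.val then b i else 0) +
      (if j.val + 1 = i.val then b j else 0)

noncomputable def Bmat (b : Fin n → ℝ) : Matrix (Fin n) (Fin n) ℝ :=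
  Matrix.of fun i j =>
    (if i.val = n - 1 ∧ j.val = 0 then b i else 0) +
      (if j.val = n - 1 ∧ i.val = 0 then b j else 0)

variable (p b : Fin n → ℝ)

lemma bb_lt {t : ℕ} (ht : t < n) : bb b t = b ⟨t, ht⟩ := by
  unfold bb; congr 1; exact Fin.ext (by simp [Nat.mod_eq_of_lt ht])

lemma bb_add_n (t : ℕ) : bb b (n + t) = bb b t := by
  unfold bb; congr 1; exact Fin.ext (by simp [Nat.add_mod_left])

lemma prod_shift (a : ℕ) : (∏ m ∈ Finset.range n, bb b (a + m)) = ∏ r, b r := by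
  have npos : 0 < n := Nat.pos_of_ne_zero (NeZero.ne n)
  have h1 : (∏ m ∈ Finset.range n, bb b (a + m)) = ∏ x : Fin n, bb b (a + x.val) := by
    rw [Fin.prod_univ_eq_prod_range (fun m => bb b (a + m)) n]
  rw [h1]
  have h2 : ∀ x : Fin n, bb b (a + x.val) = b (⟨a % n, Nat.mod_lt _ npos⟩ + x) := by
    intro x
    unfold bb; congr 1
    apply Fin.ext
    show (a + x.val) % n = ((⟨a % n, Nat.mod_lt _ npos⟩ : Fin n) + x).val
    rw [Fin.add_def]
    show (a + x.val) % n = (a % n + x.val) % n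
    conv_lhs => rw [Nat.add_mod]
    rw [Nat.mod_eq_of_lt x.isLt]
  calc (∏ x : Fin n, bb b (a + x.val)) = ∏ x : Fin n, b ((⟨a % n, Nat.mod_lt _ npos⟩ : Fin n) + x) :=
        Finset.prod_congr rfl (fun x _ => h2 x)
    _ = ∏ r, b r := Fintype.prod_equiv (Equiv.addLeft (⟨a % n, Nat.mod_lt _ npos⟩ : Fin n)) _ _ (fun x => rfl)

end TodaAux

namespace TodaAux
variable {n : ℕ} [NeZero n] (p b : Fin n → ℝ)

lemma Nsupp {l j : Fin n} (h : Nmat p b l j ≠ 0) :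
    l.val = j.val ∨ l.val + 1 = j.val ∨ j.val + 1 = l.val := by
  by_contra hc
  push_neg at hc
  obtain ⟨h1, h2, h3⟩ := hc
  apply h
  show (if l = j then p l else 0) + (if l.val + 1 = j.val then b l else 0) +
      (if j.val + 1 = l.val then b j else 0) = 0
  rw [if_neg (fun he => h1 (by rw [he])), if_neg h2, if_neg h3]
  ring

lemma Bsupp {l j : Fin n} (h : Bmat b l j ≠ 0) :
    (l.val = n - 1 ∧ j.val = 0) ∨ (j.val = n - 1 ∧ l.val = 0) := by
  by_contra hc
  push_neg at hc
  apply h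
  show (if l.val = n - 1 ∧ j.val = 0 then b l else 0) +
      (if j.val = n - 1 ∧ l.val = 0 then b j else 0) = 0
  rw [if_neg, if_neg]
  · ring
  · intro hh; exact (hc.2 hh.1) hh.2
  · intro hh; exact (hc.1 hh.1) hh.2

lemma Nval_up {l j : Fin n} (h : l.val + 1 = j.val) : Nmat p b l j = b l := by
  show (if l = j then p l else 0) + (if l.val + 1 = j.val then b l else 0) +
      (if j.val + 1 = l.val then b j else 0) = b l
  rw [if_neg (fun he => by rw [he] at h; omega), if_pos h, if_neg (by omega)]
  ring

lemma Nval_down {l j : Fin n} (h : j.val + 1 = l.val) : Nmat p b l j = b j := by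
  show (if l = j then p l else 0) + (if l.val + 1 = j.val then b l else 0) +
      (if j.val + 1 = l.val then b j else 0) = b j
  rw [if_neg (fun he => by rw [he] at h; omega), if_neg (by omega), if_pos h]
  ring

lemma Bval1 (hn : 2 ≤ n) {l j : Fin n} (h1 : l.val = n - 1) (h2 : j.val = 0) :
    Bmat b l j = b l := by
  show (if l.val = n - 1 ∧ j.val = 0 then b l else 0) +
      (if j.val = n - 1 ∧ l.val = 0 then b j else 0) = b l
  rw [if_pos ⟨h1, h2⟩, if_neg (by omega)]
  ring

lemma Bval2 (hn : 2 ≤ n) {l j : Fin n} (h1 : j.val = n - 1) (h2 : l.val = 0) :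
    Bmat b l j = b j := by
  show (if l.val = n - 1 ∧ j.val = 0 then b l else 0) +
      (if j.val = n - 1 ∧ l.val = 0 then b j else 0) = b j
  rw [if_neg (by omega), if_pos ⟨h1, h2⟩]
  ring

lemma Nsymm : (Nmat p b)ᵀ = Nmat p b := by
  ext i j
  show (if j = i then p j else 0) + (if j.val + 1 = i.val then b j else 0) +
      (if i.val + 1 = j.val then b i else 0) =
    (if i = j then p i else 0) + (if i.val + 1 = j.val then b i else 0) +
      (if j.val + 1 = i.val then b j else 0)
  by_cases h : i = j
  · subst h; ring_nf
  · rw [if_neg h, if_neg (fun he => h (he.symm))]; ring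

lemma Bsymm : (Bmat b)ᵀ = Bmat b := by
  ext i j
  show (if j.val = n - 1 ∧ i.val = 0 then b j else 0) +
      (if i.val = n - 1 ∧ j.val = 0 then b i else 0) =
    (if i.val = n - 1 ∧ j.val = 0 then b i else 0) +
      (if j.val = n - 1 ∧ i.val = 0 then b j else 0)
  ring

/-- sum and difference of powers -/
noncomputable def Smat (k : ℕ) : Matrix (Fin n) (Fin n) ℝ :=
  (Nmat p b + Bmat b) ^ k + (Nmat p b - Bmat b) ^ k

noncomputable def Dmat (k : ℕ) : Matrix (Fin n) (Fin n) ℝ :=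
  (Nmat p b + Bmat b) ^ k - (Nmat p b - Bmat b) ^ k

lemma Ssymm (k : ℕ) : (Smat p b k)ᵀ = Smat p b k := by
  unfold Smat
  rw [transpose_add, transpose_pow, transpose_pow, transpose_add, transpose_sub,
    Nsymm, Bsymm]

lemma Dsymm (k : ℕ) : (Dmat p b k)ᵀ = Dmat p b k := by
  unfold Dmat
  rw [transpose_sub, transpose_pow, transpose_pow, transpose_add, transpose_sub,
    Nsymm, Bsymm]

lemma Srec (k : ℕ) : Smat p b (k + 1) = Smat p b k * Nmat p b + Dmat p b k * Bmat b := by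
  unfold Smat Dmat
  rw [pow_succ, pow_succ]
  noncomm_ring

lemma Drec (k : ℕ) : Dmat p b (k + 1) = Dmat p b k * Nmat p b + Smat p b k * Bmat b := by
  unfold Smat Dmat
  rw [pow_succ, pow_succ]
  noncomm_ring

end TodaAux

set_option linter.unusedSectionVars false

namespace TodaAux
variable {n : ℕ} [NeZero n] (p b : Fin n → ℝ)

def Inv (k : ℕ) : Prop :=
  (∀ i j : Fin n, j.val + k < i.val ∨ i.val + k < j.val → Smat p b k i j = 0) ∧
  (∀ i j : Fin n, j.val + k < i.val + n → i.val + k < j.val + n → Dmat p b k i j = 0) ∧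
  (∀ i j : Fin n, i.val + n = j.val + k →
      Dmat p b k i j = 2 * ∏ m ∈ Finset.range k, bb b (j.val + m)) ∧
  (∀ i j : Fin n, i.val + k = j.val →
      Smat p b k i j = 2 * ∏ m ∈ Finset.range k, bb b (i.val + m))

lemma Dmat_comm (k : ℕ) (i j : Fin n) : Dmat p b k i j = Dmat p b k j i := by
  conv_lhs => rw [← Dsymm p b k]
  rw [Matrix.transpose_apply]

lemma Smat_comm (k : ℕ) (i j : Fin n) : Smat p b k i j = Smat p b k j i := by
  conv_lhs => rw [← Ssymm p b k]
  rw [Matrix.transpose_apply]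

lemma inv_H3' {k : ℕ} (hI : Inv p b k) :
    ∀ i j : Fin n, j.val + n = i.val + k →
      Dmat p b k i j = 2 * ∏ m ∈ Finset.range k, bb b (i.val + m) := by
  intro i j h
  rw [Dmat_comm]
  exact hI.2.2.1 j i h

lemma inv_H4' {k : ℕ} (hI : Inv p b k) :
    ∀ i j : Fin n, j.val + k = i.val →
      Smat p b k i j = 2 * ∏ m ∈ Finset.range k, bb b (j.val + m) := by
  intro i j h
  rw [Smat_comm]
  exact hI.2.2.2 j i h

lemma inv_zero : Inv p b 0 := by
  refine ⟨?_, ?_, ?_, ?_⟩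
  · intro i j h
    have hij : i ≠ j := by
      intro he; subst he; omega
    show ((Nmat p b + Bmat b) ^ 0 + (Nmat p b - Bmat b) ^ 0) i j = 0
    rw [pow_zero, pow_zero, Matrix.add_apply, Matrix.one_apply_ne hij]
    ring
  · intro i j _ _
    show ((Nmat p b + Bmat b) ^ 0 - (Nmat p b - Bmat b) ^ 0) i j = 0
    rw [pow_zero, pow_zero, Matrix.sub_apply]
    ring
  · intro i j h
    have := i.isLt; have := j.isLt
    exfalso; omega
  · intro i j h
    have hij : i = j := Fin.ext (by omega)
    subst hij
    show ((Nmat p b + Bmat b) ^ 0 + (Nmat p b - Bmat b) ^ 0) i i = 2 * ∏ m ∈ Finset.range 0, bb b (i.val + m)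
    rw [pow_zero, pow_zero, Matrix.add_apply, Matrix.one_apply_eq]
    norm_num

end TodaAux

namespace TodaAux
variable {n : ℕ} [NeZero n] (p b : Fin n → ℝ)

lemma inv_step (hn : 2 ≤ n) (k : ℕ) (hk : k + 1 ≤ n - 1) (ih : Inv p b k) :
    Inv p b (k + 1) := by
  have npos : 0 < n := by omega
  refine ⟨?_, ?_, ?_, ?_⟩
  -- H1 : band support of S
  · intro i j hyp
    have hi := i.isLt; have hj := j.isLt
    rw [Srec, Matrix.add_apply, Matrix.mul_apply, Matrix.mul_apply]
    have hNs : (∑ l, Smat p b k i l * Nmat p b l j) = 0 := by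
      apply Finset.sum_eq_zero
      intro l _
      by_cases hN : Nmat p b l j = 0
      · rw [hN, mul_zero]
      · have hl := Nsupp p b hN
        have hlt := l.isLt
        rw [ih.1 i l (by omega), zero_mul]
    have hBs : (∑ l, Dmat p b k i l * Bmat b l j) = 0 := by
      apply Finset.sum_eq_zero
      intro l _
      by_cases hB : Bmat b l j = 0
      · rw [hB, mul_zero]
      · have hl := Bsupp b hB
        have hlt := l.isLt
        rw [ih.2.1 i l (by omega) (by omega), zero_mul]
    rw [hNs, hBs, add_zero]
  -- H2 : anti-band support of D
  · intro i j h1 h2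
    have hi := i.isLt; have hj := j.isLt
    rw [Drec, Matrix.add_apply, Matrix.mul_apply, Matrix.mul_apply]
    have hNs : (∑ l, Dmat p b k i l * Nmat p b l j) = 0 := by
      apply Finset.sum_eq_zero
      intro l _
      by_cases hN : Nmat p b l j = 0
      · rw [hN, mul_zero]
      · have hl := Nsupp p b hN
        have hlt := l.isLt
        rw [ih.2.1 i l (by omega) (by omega), zero_mul]
    have hBs : (∑ l, Smat p b k i l * Bmat b l j) = 0 := by
      apply Finset.sum_eq_zero
      intro l _
      by_cases hB : Bmat b l j = 0
      · rw [hB, mul_zero]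
      · have hl := Bsupp b hB
        have hlt := l.isLt
        rw [ih.1 i l (by omega), zero_mul]
    rw [hNs, hBs, add_zero]
  -- H3 : lower boundary values of D
  · intro i j he
    have hi := i.isLt; have hj := j.isLt
    rw [Drec, Matrix.add_apply, Matrix.mul_apply, Matrix.mul_apply]
    by_cases hjn : j.val + 1 < n
    · -- generic case: single term from N-sum
      have hBs : (∑ l, Smat p b k i l * Bmat b l j) = 0 := by
        apply Finset.sum_eq_zero
        intro l _
        by_cases hB : Bmat b l j = 0
        · rw [hB, mul_zero]
        · have hl := Bsupp b hB
          exfalso; omega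
      have hNs : (∑ l, Dmat p b k i l * Nmat p b l j) =
          2 * ∏ m ∈ Finset.range (k + 1), bb b (j.val + m) := by
        rw [Finset.sum_eq_single (⟨j.val + 1, hjn⟩ : Fin n)]
        · rw [ih.2.2.1 i ⟨j.val + 1, hjn⟩ (by simp only [Fin.val_mk]; omega),
            Nval_down p b (show j.val + 1 = (⟨j.val + 1, hjn⟩ : Fin n).val from rfl)]
          rw [Finset.prod_range_succ']
          have h0 : bb b (j.val + 0) = b j := by
            rw [Nat.add_zero, bb_lt b j.isLt]
          have h1 : ∀ m, m ∈ Finset.range k → bb b (j.val + (m + 1)) =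
              bb b ((⟨j.val + 1, hjn⟩ : Fin n).val + m) := by
            intro m _
            congr 1
            simp only [Fin.val_mk]
            omega
          rw [h0, Finset.prod_congr rfl h1]
          ring
        · intro l _ hne
          by_cases hN : Nmat p b l j = 0
          · rw [hN, mul_zero]
          · have hl := Nsupp p b hN
            have hlt := l.isLt
            rcases hl with hl | hl | hl
            · rw [ih.2.1 i l (by omega) (by omega), zero_mul]
            · rw [ih.2.1 i l (by omega) (by omega), zero_mul]
            · exact absurd (Fin.ext (by simp only [Fin.val_mk]; omega)) hne
        · intro hmem
          exact absurd (Finset.mem_univ _) hmem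
      rw [hNs, hBs, add_zero]
    · -- corner case : j = n-1, single term from B-sum
      have hjv : j.val = n - 1 := by omega
      have hiv : i.val = k := by omega
      have hNs : (∑ l, Dmat p b k i l * Nmat p b l j) = 0 := by
        apply Finset.sum_eq_zero
        intro l _
        by_cases hN : Nmat p b l j = 0
        · rw [hN, mul_zero]
        · have hl := Nsupp p b hN
          have hlt := l.isLt
          rcases hl with hl | hl | hl
          · rw [ih.2.1 i l (by omega) (by omega), zero_mul]
          · rw [ih.2.1 i l (by omega) (by omega), zero_mul]
          · exfalso; omega
      have hBs : (∑ l, Smat p b k i l * Bmat b l j) =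
          2 * ∏ m ∈ Finset.range (k + 1), bb b (j.val + m) := by
        rw [Finset.sum_eq_single (⟨0, npos⟩ : Fin n)]
        · rw [inv_H4' p b ih i ⟨0, npos⟩ (by simp only [Fin.val_mk]; omega),
            Bval2 b hn hjv (show (⟨0, npos⟩ : Fin n).val = 0 from rfl)]
          rw [Finset.prod_range_succ']
          have h0 : bb b (j.val + 0) = b j := by
            rw [Nat.add_zero, bb_lt b j.isLt]
          have h1 : ∀ m, m ∈ Finset.range k → bb b (j.val + (m + 1)) =
              bb b ((⟨0, npos⟩ : Fin n).val + m) := by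
            intro m _
            simp only [Fin.val_mk, Nat.zero_add]
            rw [show j.val + (m + 1) = n + m by omega, bb_add_n]
          rw [h0, Finset.prod_congr rfl h1]
          ring
        · intro l _ hne
          by_cases hB : Bmat b l j = 0
          · rw [hB, mul_zero]
          · have hl := Bsupp b hB
            rcases hl with hl | hl
            · exfalso; omega
            · exact absurd (Fin.ext (by simp only [Fin.val_mk]; omega)) hne
        · intro hmem
          exact absurd (Finset.mem_univ _) hmem
      rw [hNs, hBs, zero_add]
  -- H4 : band boundary values of S
  · intro i j he
    have hi := i.isLt; have hj := j.isLt
    rw [Srec, Matrix.add_apply, Matrix.mul_apply, Matrix.mul_apply]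
    have hj1 : 1 ≤ j.val := by omega
    have hl0 : j.val - 1 < n := by omega
    have hBs : (∑ l, Dmat p b k i l * Bmat b l j) = 0 := by
      apply Finset.sum_eq_zero
      intro l _
      by_cases hB : Bmat b l j = 0
      · rw [hB, mul_zero]
      · have hl := Bsupp b hB
        have hlt := l.isLt
        rcases hl with hl | hl
        · exfalso; omega
        · rw [ih.2.1 i l (by omega) (by omega), zero_mul]
    have hNs : (∑ l, Smat p b k i l * Nmat p b l j) =
        2 * ∏ m ∈ Finset.range (k + 1), bb b (i.val + m) := by
      rw [Finset.sum_eq_single (⟨j.val - 1, hl0⟩ : Fin n)]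
      · rw [ih.2.2.2 i ⟨j.val - 1, hl0⟩ (by simp only [Fin.val_mk]; omega),
          Nval_up p b (show (⟨j.val - 1, hl0⟩ : Fin n).val + 1 = j.val from by
            simp only [Fin.val_mk]; omega)]
        rw [Finset.prod_range_succ]
        have h0 : bb b (i.val + k) = b ⟨j.val - 1, hl0⟩ := by
          rw [bb_lt b (show i.val + k < n by omega)]
          congr 1
          exact Fin.ext (by simp only [Fin.val_mk]; omega)
        rw [h0]
        ring
      · intro l _ hne
        by_cases hN : Nmat p b l j = 0
        · rw [hN, mul_zero]
        · have hl := Nsupp p b hN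
          have hlt := l.isLt
          rcases hl with hl | hl | hl
          · rw [ih.1 i l (by omega), zero_mul]
          · exact absurd (Fin.ext (by simp only [Fin.val_mk]; omega)) hne
          · rw [ih.1 i l (by omega), zero_mul]
      · intro hmem
        exact absurd (Finset.mem_univ _) hmem
    rw [hNs, hBs, add_zero]

lemma inv_all (hn : 2 ≤ n) : ∀ k, k ≤ n - 1 → Inv p b k := by
  intro k
  induction k with
  | zero => exact fun _ => inv_zero p b
  | succ k ihk =>
    intro hk
    exact inv_step p b hn k hk (ihk (by omega))

end TodaAux

namespace TodaAux
variable {n : ℕ} [NeZero n] (p b : Fin n → ℝ)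

def fin0 : Fin n := ⟨0, Nat.pos_of_ne_zero (NeZero.ne n)⟩
def finTop : Fin n := ⟨n - 1, Nat.sub_lt (Nat.pos_of_ne_zero (NeZero.ne n)) one_pos⟩

lemma trace_mul_std (M : Matrix (Fin n) (Fin n) ℝ) (a c : Fin n) :
    (M * Matrix.single a c (1 : ℝ)).trace = M c a := by
  have h : ∀ i, (M * Matrix.single a c (1 : ℝ)).diag i = if i = c then M i a else 0 := by
    intro i
    by_cases hic : i = c
    · subst hic; simp [Matrix.diag]
    · simp only [Matrix.diag, if_neg hic]
      exact Matrix.mul_single_apply_of_ne (1 : ℝ) a c i i hic M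
  rw [Matrix.trace]
  simp_rw [h]
  rw [Finset.sum_ite_eq' Finset.univ c]
  simp

lemma B_decomp (hn : 2 ≤ n) :
    Bmat b = b (finTop (n := n)) • Matrix.single (finTop (n := n)) (fin0 (n := n)) (1 : ℝ) +
      b (finTop (n := n)) • Matrix.single (fin0 (n := n)) (finTop (n := n)) (1 : ℝ) := by
  ext i j
  show (if i.val = n - 1 ∧ j.val = 0 then b i else 0) +
      (if j.val = n - 1 ∧ i.val = 0 then b j else 0) = _
  rw [Matrix.add_apply, Matrix.smul_apply, Matrix.smul_apply]
  have hi := i.isLt; have hj := j.isLt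
  by_cases h1 : i.val = n - 1 ∧ j.val = 0
  · have hif : i = finTop := Fin.ext (by simpa [finTop] using h1.1)
    have hjf : j = fin0 := Fin.ext (by simpa [fin0] using h1.2)
    subst hif; subst hjf
    rw [if_pos h1, if_neg (by simp only [finTop, fin0] at h1 ⊢; omega)]
    rw [Matrix.single_apply_same]
    rw [Matrix.single_apply_of_ne _ _ _ _ _ (by
      simp only [fin0, finTop, Fin.ext_iff, Fin.val_mk]
      omega)]
    simp
  · by_cases h2 : j.val = n - 1 ∧ i.val = 0
    · have hif : i = fin0 := Fin.ext (by simpa [fin0] using h2.2)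
      have hjf : j = finTop := Fin.ext (by simpa [finTop] using h2.1)
      subst hif; subst hjf
      rw [if_neg h1, if_pos h2]
      rw [Matrix.single_apply_same]
      rw [Matrix.single_apply_of_ne _ _ _ _ _ (by
        simp only [fin0, finTop, Fin.ext_iff, Fin.val_mk]
        omega)]
      simp
    · rw [if_neg h1, if_neg h2]
      rw [Matrix.single_apply_of_ne _ _ _ _ _ (by
          simp only [fin0, finTop, Fin.ext_iff, Fin.val_mk]
          omega),
        Matrix.single_apply_of_ne _ _ _ _ _ (by
          simp only [fin0, finTop, Fin.ext_iff, Fin.val_mk]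
          omega)]
      simp

end TodaAux

namespace TodaAux
variable {n : ℕ} [NeZero n] (p b : Fin n → ℝ)

lemma trace_D_small (hn : 2 ≤ n) (m : ℕ) (hm : m ≤ n - 1) : (Dmat p b m).trace = 0 := by
  have hI := inv_all p b hn m hm
  rw [Matrix.trace]
  apply Finset.sum_eq_zero
  intro i _
  show Dmat p b m i i = 0
  exact hI.2.1 i i (by omega) (by omega)

lemma trace_SB (hn : 2 ≤ n) (hb : ∏ r, b r = 1) :
    (Smat p b (n - 1) * Bmat b).trace = 4 := by
  have hI := inv_all p b hn (n - 1) le_rfl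
  have hS1 : Smat p b (n - 1) (fin0 (n := n)) (finTop (n := n)) =
      2 * ∏ m ∈ Finset.range (n - 1), bb b m := by
    have := hI.2.2.2 (fin0 (n := n)) (finTop (n := n))
      (by simp only [fin0, finTop, Fin.val_mk]; omega)
    simpa [fin0] using this
  have hS2 : Smat p b (n - 1) (finTop (n := n)) (fin0 (n := n)) =
      2 * ∏ m ∈ Finset.range (n - 1), bb b m := by
    have := inv_H4' p b hI (finTop (n := n)) (fin0 (n := n))
      (by simp only [fin0, finTop, Fin.val_mk]; omega)
    simpa [fin0] using this
  have key : b (finTop (n := n)) * (2 * ∏ m ∈ Finset.range (n - 1), bb b m) = 2 := by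
    have hprod : (∏ m ∈ Finset.range n, bb b (0 + m)) = ∏ r, b r := prod_shift b 0
    simp only [Nat.zero_add] at hprod
    have hn1 : n - 1 + 1 = n := by omega
    have hsplit : (∏ m ∈ Finset.range (n - 1 + 1), bb b m) =
        (∏ m ∈ Finset.range (n - 1), bb b m) * bb b (n - 1) := Finset.prod_range_succ _ _
    rw [hn1] at hsplit
    have hbb : bb b (n - 1) = b (finTop (n := n)) := by
      rw [bb_lt b (show n - 1 < n by omega)]; rfl
    rw [hbb] at hsplit
    calc b (finTop (n := n)) * (2 * ∏ m ∈ Finset.range (n - 1), bb b m)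
        = 2 * ((∏ m ∈ Finset.range (n - 1), bb b m) * b (finTop (n := n))) := by ring
      _ = 2 * 1 := by rw [← hsplit, hprod, hb]
      _ = 2 := by norm_num
  rw [B_decomp b hn, Matrix.mul_add, Matrix.mul_smul, Matrix.mul_smul, Matrix.trace_add,
    Matrix.trace_smul, Matrix.trace_smul, trace_mul_std, trace_mul_std, hS1, hS2]
  simp only [smul_eq_mul]
  rw [key]
  norm_num

end TodaAux

namespace TodaAux
variable {n : ℕ} [NeZero n] (p b : Fin n → ℝ)

lemma trace_DN (hn : 2 ≤ n) (hb : ∏ r, b r = 1) :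
    (Dmat p b (n - 1) * Nmat p b).trace = 4 * (n : ℝ) - 4 := by
  have hI := inv_all p b hn (n - 1) le_rfl
  have inner : ∀ i : Fin n, ((Dmat p b (n - 1) * Nmat p b).diag i) =
      (if 1 ≤ i.val then (2 : ℝ) else 0) + (if i.val + 1 < n then (2 : ℝ) else 0) := by
    intro i
    have hi := i.isLt
    show (Dmat p b (n - 1) * Nmat p b) i i = _
    rw [Matrix.mul_apply]
    have hsplit : ∀ l : Fin n, Dmat p b (n - 1) i l * Nmat p b l i =
        Dmat p b (n - 1) i l * (if l = i then p l else 0) +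
          Dmat p b (n - 1) i l * (if l.val + 1 = i.val then b l else 0) +
          Dmat p b (n - 1) i l * (if i.val + 1 = l.val then b i else 0) := by
      intro l
      have hN : Nmat p b l i = (if l = i then p l else 0) +
          (if l.val + 1 = i.val then b l else 0) + (if i.val + 1 = l.val then b i else 0) := rfl
      rw [hN]; ring
    rw [Finset.sum_congr rfl (fun l _ => hsplit l), Finset.sum_add_distrib,
      Finset.sum_add_distrib]
    have S1 : (∑ l, Dmat p b (n - 1) i l * (if l = i then p l else 0)) = 0 := by
      apply Finset.sum_eq_zero; intro l _
      by_cases hl : l = i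
      · subst hl; rw [hI.2.1 l l (by omega) (by omega), zero_mul]
      · rw [if_neg hl, mul_zero]
    have S2 : (∑ l, Dmat p b (n - 1) i l * (if l.val + 1 = i.val then b l else 0)) =
        (if 1 ≤ i.val then (2 : ℝ) else 0) := by
      by_cases hi1 : 1 ≤ i.val
      · rw [if_pos hi1]
        have hl0 : i.val - 1 < n := by omega
        rw [Finset.sum_eq_single (⟨i.val - 1, hl0⟩ : Fin n)]
        · rw [if_pos (by simp only [Fin.val_mk]; omega)]
          rw [inv_H3' p b hI i ⟨i.val - 1, hl0⟩ (by simp only [Fin.val_mk]; omega)]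
          have hbl : b (⟨i.val - 1, hl0⟩ : Fin n) = bb b (i.val - 1) := by
            rw [bb_lt b hl0]
          have hp : (∏ m ∈ Finset.range n, bb b (i.val - 1 + m)) = 1 := by
            rw [prod_shift b (i.val - 1), hb]
          have hps : (∏ m ∈ Finset.range (n - 1 + 1), bb b (i.val - 1 + m)) =
              (∏ m ∈ Finset.range (n - 1), bb b (i.val - 1 + (m + 1))) *
                bb b (i.val - 1 + 0) := Finset.prod_range_succ' _ _
          rw [show n - 1 + 1 = n by omega] at hps
          have hcongr : ∀ m ∈ Finset.range (n - 1),
              bb b (i.val - 1 + (m + 1)) = bb b (i.val + m) := by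
            intro m _; congr 1; omega
          rw [Finset.prod_congr rfl hcongr] at hps
          rw [hps] at hp
          rw [hbl]
          calc 2 * (∏ m ∈ Finset.range (n - 1), bb b (i.val + m)) * bb b (i.val - 1)
              = 2 * ((∏ m ∈ Finset.range (n - 1), bb b (i.val + m)) *
                  bb b (i.val - 1 + 0)) := by rw [Nat.add_zero]; ring
            _ = 2 * 1 := by rw [hp]
            _ = 2 := by norm_num
        · intro l _ hne
          rw [if_neg (fun hc => hne (Fin.ext (by simp only [Fin.val_mk]; omega))), mul_zero]
        · intro hm; exact absurd (Finset.mem_univ _) hm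
      · rw [if_neg hi1]
        apply Finset.sum_eq_zero; intro l _
        rw [if_neg (by omega), mul_zero]
    have S3 : (∑ l, Dmat p b (n - 1) i l * (if i.val + 1 = l.val then b i else 0)) =
        (if i.val + 1 < n then (2 : ℝ) else 0) := by
      by_cases hi1 : i.val + 1 < n
      · rw [if_pos hi1]
        rw [Finset.sum_eq_single (⟨i.val + 1, hi1⟩ : Fin n)]
        · rw [if_pos (by simp only [Fin.val_mk])]
          rw [hI.2.2.1 i ⟨i.val + 1, hi1⟩ (by simp only [Fin.val_mk]; omega)]
          have hbl : b i = bb b i.val := by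
            rw [bb_lt b i.isLt]
          have hp : (∏ m ∈ Finset.range n, bb b (i.val + m)) = 1 := by
            rw [prod_shift b i.val, hb]
          have hps : (∏ m ∈ Finset.range (n - 1 + 1), bb b (i.val + m)) =
              (∏ m ∈ Finset.range (n - 1), bb b (i.val + (m + 1))) *
                bb b (i.val + 0) := Finset.prod_range_succ' _ _
          rw [show n - 1 + 1 = n by omega] at hps
          have hcongr : ∀ m ∈ Finset.range (n - 1),
              bb b (i.val + (m + 1)) = bb b ((⟨i.val + 1, hi1⟩ : Fin n).val + m) := by
            intro m _; congr 1; simp only [Fin.val_mk]; omega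
          rw [Finset.prod_congr rfl hcongr] at hps
          rw [hps] at hp
          simp only [Nat.add_zero] at hp
          rw [hbl]
          calc 2 * (∏ m ∈ Finset.range (n - 1), bb b ((⟨i.val + 1, hi1⟩ : Fin n).val + m)) *
                bb b i.val
              = 2 * ((∏ m ∈ Finset.range (n - 1), bb b ((⟨i.val + 1, hi1⟩ : Fin n).val + m)) *
                  bb b i.val) := by ring
            _ = 2 * 1 := by rw [hp]
            _ = 2 := by norm_num
        · intro l _ hne
          rw [if_neg (fun hc => hne (Fin.ext (by simp only [Fin.val_mk]; omega))), mul_zero]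
        · intro hm; exact absurd (Finset.mem_univ _) hm
      · rw [if_neg hi1]
        apply Finset.sum_eq_zero; intro l _
        have hl := l.isLt
        rw [if_neg (by omega), mul_zero]
    rw [S1, S2, S3, zero_add]
  rw [Matrix.trace, Finset.sum_congr rfl (fun i _ => inner i), Finset.sum_add_distrib]
  have T1 : (∑ i : Fin n, (if 1 ≤ i.val then (2 : ℝ) else 0)) = 2 * (n : ℝ) - 2 := by
    have hpt : ∀ i : Fin n, (if 1 ≤ i.val then (2 : ℝ) else 0) =
        2 - (if i = fin0 (n := n) then 2 else 0) := by
      intro i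
      by_cases h : 1 ≤ i.val
      · rw [if_pos h, if_neg (fun hc => by rw [hc] at h; simp [fin0] at h)]
        ring
      · have hif : i = fin0 (n := n) := Fin.ext (by simp only [fin0, Fin.val_mk]; omega)
        rw [if_neg h, if_pos hif]
        ring
    rw [Finset.sum_congr rfl (fun i _ => hpt i), Finset.sum_sub_distrib,
      Finset.sum_const, Finset.card_univ, Fintype.card_fin,
      Finset.sum_ite_eq' Finset.univ (fin0 (n := n)) (fun _ => (2 : ℝ)),
      if_pos (Finset.mem_univ _)]
    rw [nsmul_eq_mul]
    ring
  have T2 : (∑ i : Fin n, (if i.val + 1 < n then (2 : ℝ) else 0)) = 2 * (n : ℝ) - 2 := by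
    have hpt : ∀ i : Fin n, (if i.val + 1 < n then (2 : ℝ) else 0) =
        2 - (if i = finTop (n := n) then 2 else 0) := by
      intro i
      have hi := i.isLt
      by_cases h : i.val + 1 < n
      · rw [if_pos h, if_neg (fun hc => by rw [hc] at h; simp [finTop] at h; omega)]
        ring
      · have hif : i = finTop (n := n) := Fin.ext (by simp only [finTop, Fin.val_mk]; omega)
        rw [if_neg h, if_pos hif]
        ring
    rw [Finset.sum_congr rfl (fun i _ => hpt i), Finset.sum_sub_distrib,
      Finset.sum_const, Finset.card_univ, Fintype.card_fin,
      Finset.sum_ite_eq' Finset.univ (finTop (n := n)) (fun _ => (2 : ℝ)),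
      if_pos (Finset.mem_univ _)]
    rw [nsmul_eq_mul]
    ring
  rw [T1, T2]
  ring

lemma trace_Dn (hn : 2 ≤ n) (hb : ∏ r, b r = 1) :
    (Dmat p b n).trace = 4 * (n : ℝ) := by
  have hrec := Drec p b (n - 1)
  rw [show n - 1 + 1 = n by omega] at hrec
  rw [hrec, Matrix.trace_add, trace_DN p b hn hb, trace_SB p b hn hb]
  ring

end TodaAux

namespace TodaAux

variable {n : ℕ} [NeZero n]

abbrev E (n : ℕ) := (Fin n → ℝ) × (Fin n → ℝ)
abbrev Mat (n : ℕ) := Matrix (Fin n) (Fin n) ℝ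

/-- basis matrices -/
def Ediag (r : Fin n) : Mat n := Matrix.single r r 1
def Eoff (r : Fin n) : Mat n := Matrix.single r (r + 1) 1 + Matrix.single (r + 1) r 1

/-- directional derivative of `bfun` (instance-free formula) -/
noncomputable def dB (z v : E n) (r : Fin n) : ℝ :=
  bfun z r * ((2 : ℝ)⁻¹ * (v.1 r - v.1 (r + 1)))

/-- the derivative matrix of `Lax` at `z` in direction `v` -/
noncomputable def PhiL (z v : E n) : Mat n :=
  (∑ r, v.2 r • Ediag r) + ∑ r, dB z v r • Eoff r

/-- the derivative matrix of `LaxBar` at `z` in direction `v` -/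
noncomputable def PhiLbar (z v : E n) : Mat n :=
  (∑ r, v.2 r • Ediag r) + ∑ r, (sgn r * dB z v r) • Eoff r

lemma sum_diag_apply (f : Fin n → ℝ) (i j : Fin n) :
    (∑ r, f r • Ediag r) i j = if i = j then f i else 0 := by
  rw [Matrix.sum_apply]
  rw [Finset.sum_eq_single i]
  · by_cases h : i = j
    · subst h
      simp [Ediag, Matrix.smul_apply]
    · have h0 : Matrix.single i i (1 : ℝ) i j = 0 :=
        Matrix.single_apply_of_ne _ _ _ _ _ (fun hc => h hc.2)
      simp [Ediag, Matrix.smul_apply, h0, h]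
  · intro r _ hne
    simp [Ediag, Matrix.smul_apply, Matrix.single_apply_of_row_ne hne]
  · intro hm; exact absurd (Finset.mem_univ _) hm

lemma sum_off_apply (f : Fin n → ℝ) (i j : Fin n) :
    (∑ r, f r • Eoff r) i j =
      (if i + 1 = j then f i else 0) + (if j + 1 = i then f j else 0) := by
  have hsplit : ∀ r, (f r • Eoff r) i j =
      f r * (Matrix.single r (r + 1) (1 : ℝ)) i j + f r * (Matrix.single (r + 1) r (1 : ℝ)) i j := by
    intro r
    simp [Eoff, Matrix.smul_apply, Matrix.add_apply]
    ring
  rw [Matrix.sum_apply, Finset.sum_congr rfl (fun r _ => hsplit r), Finset.sum_add_distrib]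
  congr 1
  · rw [Finset.sum_eq_single i]
    · by_cases h : i + 1 = j
      · subst h; simp
      · have h0 : Matrix.single i (i + 1) (1 : ℝ) i j = 0 :=
          Matrix.single_apply_of_ne _ _ _ _ _ (fun hc => h hc.2)
        rw [h0, if_neg h, mul_zero]
    · intro r _ hne
      rw [Matrix.single_apply_of_row_ne hne, mul_zero]
    · intro hm; exact absurd (Finset.mem_univ _) hm
  · rw [Finset.sum_eq_single j]
    · by_cases h : j + 1 = i
      · subst h; simp
      · have h0 : Matrix.single (j + 1) j (1 : ℝ) i j = 0 :=
          Matrix.single_apply_of_ne _ _ _ _ _ (fun hc => h hc.1)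
        rw [h0, if_neg h, mul_zero]
    · intro r _ hne
      rw [Matrix.single_apply_of_col_ne (r + 1) i hne 1, mul_zero]
    · intro hm; exact absurd (Finset.mem_univ _) hm

lemma lax_repr (z : E n) : Lax z = (∑ r, z.2 r • Ediag r) + ∑ r, bfun z r • Eoff r := by
  ext i j
  rw [Matrix.add_apply, sum_diag_apply, sum_off_apply]
  show (if i = j then z.2 i else 0) + (if i + 1 = j then bfun z i else 0) +
    (if j + 1 = i then bfun z j else 0) = _
  ring

lemma laxbar_repr (z : E n) :
    LaxBar z = (∑ r, z.2 r • Ediag r) + ∑ r, (sgn r * bfun z r) • Eoff r := by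
  ext i j
  rw [Matrix.add_apply, sum_diag_apply, sum_off_apply]
  show (if i = j then z.2 i else 0) + (if i + 1 = j then sgn i * bfun z i else 0) +
    (if j + 1 = i then sgn j * bfun z j else 0) = _
  ring

end TodaAux

namespace TodaAux

section Deriv

attribute [local instance] Matrix.linftyOpSeminormedAddCommGroup Matrix.linftyOpNormedAddCommGroup
  Matrix.linftyOpIsBoundedSMul Matrix.linftyOpNormedSpace Matrix.linftyOpNonUnitalSemiNormedRing
  Matrix.linftyOpSemiNormedRing Matrix.linftyOpNonUnitalNormedRing Matrix.linftyOpNormedRing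
  Matrix.linftyOpNormedAlgebra

variable {n : ℕ} [NeZero n]

noncomputable def cP (r : Fin n) : E n →L[ℝ] ℝ :=
  (ContinuousLinearMap.proj r).comp (ContinuousLinearMap.snd ℝ (Fin n → ℝ) (Fin n → ℝ))

noncomputable def cQ (r : Fin n) : E n →L[ℝ] ℝ :=
  (ContinuousLinearMap.proj r).comp (ContinuousLinearMap.fst ℝ (Fin n → ℝ) (Fin n → ℝ))

noncomputable def ell (r : Fin n) : E n →L[ℝ] ℝ := (2 : ℝ)⁻¹ • (cQ r - cQ (r + 1))

lemma hasFDerivAt_bfun (z : E n) (r : Fin n) :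
    HasFDerivAt (fun w : E n => bfun w r) (bfun z r • ell r) z := by
  have hlin : HasFDerivAt (fun w : E n => ell (n := n) r w) (ell r) z := (ell r).hasFDerivAt
  have hexp := hlin.exp
  have hfun : (fun w : E n => Real.exp (ell (n := n) r w)) = fun w : E n => bfun w r := by
    funext w
    simp only [bfun, ell, ContinuousLinearMap.smul_apply, ContinuousLinearMap.sub_apply,
      cQ, ContinuousLinearMap.comp_apply, ContinuousLinearMap.proj_apply,
      ContinuousLinearMap.coe_fst', smul_eq_mul]
    ring_nf
  rw [hfun] at hexp
  have : Real.exp (ell (n := n) r z) = bfun z r := by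
    simp only [bfun, ell, ContinuousLinearMap.smul_apply, ContinuousLinearMap.sub_apply,
      cQ, ContinuousLinearMap.comp_apply, ContinuousLinearMap.proj_apply,
      ContinuousLinearMap.coe_fst', smul_eq_mul]
    ring_nf
  rw [this] at hexp
  exact hexp

noncomputable def PhiCLM (z : E n) : E n →L[ℝ] Mat n :=
  (∑ r, (cP r).smulRight (Ediag r)) + ∑ r, (bfun z r • ell r).smulRight (Eoff r)

noncomputable def PhiBarCLM (z : E n) : E n →L[ℝ] Mat n :=
  (∑ r, (cP r).smulRight (Ediag r)) + ∑ r, (sgn r • (bfun z r • ell r)).smulRight (Eoff r)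

lemma hasFDerivAt_lax (z : E n) : HasFDerivAt (fun w : E n => Lax w) (PhiCLM z) z := by
  have h1 : ∀ r : Fin n, HasFDerivAt (fun w : E n => w.2 r • Ediag (n := n) r)
      ((cP r).smulRight (Ediag r)) z := by
    intro r
    exact ((cP (n := n) r).hasFDerivAt (x := z)).smul_const (Ediag r)
  have h2 : ∀ r : Fin n, HasFDerivAt (fun w : E n => bfun w r • Eoff (n := n) r)
      ((bfun z r • ell r).smulRight (Eoff r)) z := by
    intro r
    exact (hasFDerivAt_bfun z r).smul_const (Eoff r)
  have hsum := (HasFDerivAt.fun_sum (fun r (_ : r ∈ Finset.univ) => h1 r)).fun_add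
    (HasFDerivAt.fun_sum (fun r (_ : r ∈ Finset.univ) => h2 r))
  have hfun : (fun w : E n => (∑ r, w.2 r • Ediag (n := n) r) + ∑ r, bfun w r • Eoff (n := n) r)
      = fun w : E n => Lax w := by
    funext w
    rw [lax_repr w]
  rw [hfun] at hsum
  exact hsum

lemma hasFDerivAt_laxbar (z : E n) : HasFDerivAt (fun w : E n => LaxBar w) (PhiBarCLM z) z := by
  have h1 : ∀ r : Fin n, HasFDerivAt (fun w : E n => w.2 r • Ediag (n := n) r)
      ((cP r).smulRight (Ediag r)) z := by
    intro r
    exact ((cP (n := n) r).hasFDerivAt (x := z)).smul_const (Ediag r)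
  have h2 : ∀ r : Fin n, HasFDerivAt (fun w : E n => (sgn r * bfun w r) • Eoff (n := n) r)
      ((sgn r • (bfun z r • ell r)).smulRight (Eoff r)) z := by
    intro r
    exact ((hasFDerivAt_bfun z r).const_mul (sgn r)).smul_const (Eoff r)
  have hsum := (HasFDerivAt.fun_sum (fun r (_ : r ∈ Finset.univ) => h1 r)).fun_add
    (HasFDerivAt.fun_sum (fun r (_ : r ∈ Finset.univ) => h2 r))
  have hfun : (fun w : E n => (∑ r, w.2 r • Ediag (n := n) r) +
      ∑ r, (sgn r * bfun w r) • Eoff (n := n) r) = fun w : E n => LaxBar w := by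
    funext w
    rw [laxbar_repr w]
  rw [hfun] at hsum
  exact hsum

lemma PhiCLM_apply (z v : E n) : PhiCLM z v = PhiL z v := by
  unfold PhiCLM PhiL
  rw [ContinuousLinearMap.add_apply, ContinuousLinearMap.sum_apply, ContinuousLinearMap.sum_apply]
  congr 1

lemma PhiBarCLM_apply (z v : E n) : PhiBarCLM z v = PhiLbar z v := by
  unfold PhiBarCLM PhiLbar
  rw [ContinuousLinearMap.add_apply, ContinuousLinearMap.sum_apply, ContinuousLinearMap.sum_apply]
  congr 1

end Deriv

end TodaAux

namespace TodaAux
section Deriv2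

attribute [local instance] Matrix.linftyOpSeminormedAddCommGroup Matrix.linftyOpNormedAddCommGroup
  Matrix.linftyOpIsBoundedSMul Matrix.linftyOpNormedSpace Matrix.linftyOpNonUnitalSemiNormedRing
  Matrix.linftyOpSemiNormedRing Matrix.linftyOpNonUnitalNormedRing Matrix.linftyOpNormedRing
  Matrix.linftyOpNormedAlgebra

variable {n : ℕ} [NeZero n]

noncomputable def powD (A : Mat n) (m : ℕ) : Mat n →L[ℝ] Mat n :=
  ∑ a ∈ Finset.range m,
    ((ContinuousLinearMap.mul ℝ (Mat n)).flip (A ^ (m - 1 - a))).comp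
      (ContinuousLinearMap.mul ℝ (Mat n) (A ^ a))

lemma powD_apply (A : Mat n) (m : ℕ) (H : Mat n) :
    powD A m H = ∑ a ∈ Finset.range m, A ^ a * H * A ^ (m - 1 - a) := by
  unfold powD
  exact (ContinuousLinearMap.sum_apply _ _ _).trans (Finset.sum_congr rfl (fun a _ => rfl))

lemma hasFDerivAt_pow_mat (A : Mat n) (m : ℕ) :
    HasFDerivAt (fun X : Mat n => X ^ m) (powD A m) A := by
  induction m with
  | zero =>
    have hfun : (fun X : Mat n => X ^ 0) = fun _ : Mat n => (1 : Mat n) := by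
      funext X; rw [pow_zero]
    have h0 : powD A 0 = 0 := by
      unfold powD; exact Finset.sum_range_zero _
    rw [hfun, h0]
    exact hasFDerivAt_const _ _
  | succ m ih =>
    have h := ih.fun_mul' (hasFDerivAt_id A)
    have hfun : (fun y : Mat n => y ^ m * id y) = fun X : Mat n => X ^ (m + 1) := by
      funext X; rw [pow_succ]; rfl
    rw [hfun] at h
    rw [show id A = A from rfl] at h
    have hclm : (A ^ m • ContinuousLinearMap.id ℝ (Mat n) + MulOpposite.op A • powD A m)
        = powD A (m + 1) := by
      apply ContinuousLinearMap.ext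
      intro H
      rw [ContinuousLinearMap.add_apply, ContinuousLinearMap.smul_apply,
        ContinuousLinearMap.id_apply, ContinuousLinearMap.smul_apply, op_smul_eq_mul, powD_apply,
        powD_apply, Finset.sum_range_succ]
      rw [smul_eq_mul, Finset.sum_mul]
      have hterm : ∀ a ∈ Finset.range m,
          A ^ a * H * A ^ (m - 1 - a) * A = A ^ a * H * A ^ (m + 1 - 1 - a) := by
        intro a ha
        rw [Finset.mem_range] at ha
        rw [mul_assoc (A ^ a * H), ← pow_succ]
        congr 2
        omega
      rw [Finset.sum_congr rfl hterm]
      rw [show m + 1 - 1 - m = 0 by omega, pow_zero, mul_one]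
      exact add_comm _ _
    rw [← hclm]
    exact h

noncomputable def traceCLM : Mat n →L[ℝ] ℝ :=
  LinearMap.toContinuousLinearMap (Matrix.traceLinearMap (Fin n) ℝ ℝ)

lemma traceCLM_apply (M : Mat n) : traceCLM M = M.trace := rfl

lemma hasFDerivAt_Ftype {G : (E n) → Mat n} {Φ : E n →L[ℝ] Mat n} {z : E n}
    (hG : HasFDerivAt G Φ z) (m : ℕ) :
    HasFDerivAt (fun w => (1 / (m : ℝ)) * (G w ^ m).trace)
      ((1 / (m : ℝ)) • (traceCLM.comp ((powD (G z) m).comp Φ))) z := by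
  have h1 : HasFDerivAt (fun w => G w ^ m) ((powD (G z) m).comp Φ) z :=
    (hasFDerivAt_pow_mat (G z) m).comp z hG
  have h2 : HasFDerivAt (fun w => ((G w ^ m)).trace)
      (traceCLM.comp ((powD (G z) m).comp Φ)) z := by
    have := (traceCLM (n := n)).hasFDerivAt.comp z h1
    exact this
  exact h2.const_mul _

lemma eval_deriv {G : (E n) → Mat n} {Φ : E n →L[ℝ] Mat n} {z : E n} (m : ℕ) (hm : 1 ≤ m)
    (v : E n) :
    ((1 / (m : ℝ)) • (traceCLM.comp ((powD (G z) m).comp Φ))) v =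
      (G z ^ (m - 1) * Φ v).trace := by
  rw [ContinuousLinearMap.smul_apply, ContinuousLinearMap.comp_apply,
    ContinuousLinearMap.comp_apply, traceCLM_apply, powD_apply, Matrix.trace_sum]
  have hterm : ∀ a ∈ Finset.range m,
      (G z ^ a * Φ v * G z ^ (m - 1 - a)).trace = (G z ^ (m - 1) * Φ v).trace := by
    intro a ha
    rw [Finset.mem_range] at ha
    rw [Matrix.trace_mul_comm, ← mul_assoc, ← pow_add]
    congr 3
    omega
  rw [Finset.sum_congr rfl hterm, Finset.sum_const, Finset.card_range, nsmul_eq_mul,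
    smul_eq_mul]
  have hm0 : (m : ℝ) ≠ 0 := Nat.cast_ne_zero.mpr (by omega)
  field_simp

lemma fderiv_tracepow_apply {G : (E n) → Mat n} {Φ : E n →L[ℝ] Mat n} {z : E n}
    (hG : HasFDerivAt G Φ z) {m : ℕ} (hm : 1 ≤ m) (v : E n) :
    fderiv ℝ (fun w => (1 / (m : ℝ)) * (G w ^ m).trace) z v =
      (G z ^ (m - 1) * Φ v).trace := by
  rw [(hasFDerivAt_Ftype hG m).fderiv]
  exact eval_deriv m hm v

end Deriv2
end TodaAux

namespace TodaAux
variable {n : ℕ} [NeZero n]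

lemma fin_succ_iff (hn : 2 ≤ n) (i j : Fin n) :
    i + 1 = j ↔ (i.val + 1 = j.val ∨ (i.val = n - 1 ∧ j.val = 0)) := by
  have hv : (i + 1 : Fin n).val = (i.val + 1) % n := by
    rw [Fin.add_def]
    simp only [Fin.val_one']
    congr 1
    rw [Nat.mod_eq_of_lt (by omega)]
  rw [Fin.ext_iff, hv]
  have hi := i.isLt; have hj := j.isLt
  by_cases hc : i.val + 1 < n
  · rw [Nat.mod_eq_of_lt hc]
    omega
  · have he : i.val + 1 = n := by omega
    rw [he, Nat.mod_self]
    omega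

lemma fin_succ_zero_iff (hn : 2 ≤ n) (i : Fin n) : (i + 1 = 0) ↔ i.val = n - 1 := by
  have hi := i.isLt
  have h0 : (0 : Fin n).val = 0 := rfl
  rw [fin_succ_iff hn i 0, h0]
  omega

lemma sgn_eq_one (hn : 2 ≤ n) {i : Fin n} (h : i.val ≠ n - 1) : sgn i = 1 := by
  unfold sgn
  rw [if_neg (fun hc => h ((fin_succ_zero_iff hn i).mp hc))]

lemma sgn_eq_neg (hn : 2 ≤ n) {i : Fin n} (h : i.val = n - 1) : sgn i = -1 := by
  unfold sgn
  rw [if_pos ((fin_succ_zero_iff hn i).mpr h)]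

lemma lax_decomp (hn : 2 ≤ n) (z : (Fin n → ℝ) × (Fin n → ℝ)) :
    Lax z = Nmat z.2 (bfun z) + Bmat (bfun z) := by
  ext i j
  have hi := i.isLt; have hj := j.isLt
  rw [Matrix.add_apply]
  show (if i = j then z.2 i else 0) + (if i + 1 = j then bfun z i else 0) +
      (if j + 1 = i then bfun z j else 0) =
    ((if i = j then z.2 i else 0) + (if i.val + 1 = j.val then bfun z i else 0) +
      (if j.val + 1 = i.val then bfun z j else 0)) +
    ((if i.val = n - 1 ∧ j.val = 0 then bfun z i else 0) +
      (if j.val = n - 1 ∧ i.val = 0 then bfun z j else 0))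
  have h2 : (if i + 1 = j then bfun z i else 0) =
      (if i.val + 1 = j.val then bfun z i else 0) +
        (if i.val = n - 1 ∧ j.val = 0 then bfun z i else 0) := by
    by_cases hA : i.val + 1 = j.val
    · rw [if_pos ((fin_succ_iff hn i j).mpr (Or.inl hA)), if_pos hA, if_neg (by omega)]
      ring
    · by_cases hB : i.val = n - 1 ∧ j.val = 0
      · rw [if_pos ((fin_succ_iff hn i j).mpr (Or.inr hB)), if_neg hA, if_pos hB]
        ring
      · have hC : ¬(i + 1 = j) := by
          intro h
          rcases (fin_succ_iff hn i j).mp h with h' | h'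
          · exact hA h'
          · exact hB h'
        rw [if_neg hC, if_neg hA, if_neg hB]
        ring
  have h3 : (if j + 1 = i then bfun z j else 0) =
      (if j.val + 1 = i.val then bfun z j else 0) +
        (if j.val = n - 1 ∧ i.val = 0 then bfun z j else 0) := by
    by_cases hA : j.val + 1 = i.val
    · rw [if_pos ((fin_succ_iff hn j i).mpr (Or.inl hA)), if_pos hA, if_neg (by omega)]
      ring
    · by_cases hB : j.val = n - 1 ∧ i.val = 0
      · rw [if_pos ((fin_succ_iff hn j i).mpr (Or.inr hB)), if_neg hA, if_pos hB]
        ring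
      · have hC : ¬(j + 1 = i) := by
          intro h
          rcases (fin_succ_iff hn j i).mp h with h' | h'
          · exact hA h'
          · exact hB h'
        rw [if_neg hC, if_neg hA, if_neg hB]
        ring
  rw [h2, h3]
  ring

lemma laxbar_decomp (hn : 2 ≤ n) (z : (Fin n → ℝ) × (Fin n → ℝ)) :
    LaxBar z = Nmat z.2 (bfun z) - Bmat (bfun z) := by
  ext i j
  have hi := i.isLt; have hj := j.isLt
  rw [Matrix.sub_apply]
  show (if i = j then z.2 i else 0) + (if i + 1 = j then sgn i * bfun z i else 0) +
      (if j + 1 = i then sgn j * bfun z j else 0) =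
    ((if i = j then z.2 i else 0) + (if i.val + 1 = j.val then bfun z i else 0) +
      (if j.val + 1 = i.val then bfun z j else 0)) -
    ((if i.val = n - 1 ∧ j.val = 0 then bfun z i else 0) +
      (if j.val = n - 1 ∧ i.val = 0 then bfun z j else 0))
  have h2 : (if i + 1 = j then sgn i * bfun z i else 0) =
      (if i.val + 1 = j.val then bfun z i else 0) -
        (if i.val = n - 1 ∧ j.val = 0 then bfun z i else 0) := by
    by_cases hA : i.val + 1 = j.val
    · rw [if_pos ((fin_succ_iff hn i j).mpr (Or.inl hA)), if_pos hA, if_neg (by omega),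
        sgn_eq_one hn (by omega)]
      ring
    · by_cases hB : i.val = n - 1 ∧ j.val = 0
      · rw [if_pos ((fin_succ_iff hn i j).mpr (Or.inr hB)), if_neg hA, if_pos hB,
          sgn_eq_neg hn hB.1]
        ring
      · have hC : ¬(i + 1 = j) := by
          intro h
          rcases (fin_succ_iff hn i j).mp h with h' | h'
          · exact hA h'
          · exact hB h'
        rw [if_neg hC, if_neg hA, if_neg hB]
        ring
  have h3 : (if j + 1 = i then sgn j * bfun z j else 0) =
      (if j.val + 1 = i.val then bfun z j else 0) -
        (if j.val = n - 1 ∧ i.val = 0 then bfun z j else 0) := by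
    by_cases hA : j.val + 1 = i.val
    · rw [if_pos ((fin_succ_iff hn j i).mpr (Or.inl hA)), if_pos hA, if_neg (by omega),
        sgn_eq_one hn (by omega)]
      ring
    · by_cases hB : j.val = n - 1 ∧ i.val = 0
      · rw [if_pos ((fin_succ_iff hn j i).mpr (Or.inr hB)), if_neg hA, if_pos hB,
          sgn_eq_neg hn hB.1]
        ring
      · have hC : ¬(j + 1 = i) := by
          intro h
          rcases (fin_succ_iff hn j i).mp h with h' | h'
          · exact hA h'
          · exact hB h'
        rw [if_neg hC, if_neg hA, if_neg hB]
        ring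
  rw [h2, h3]
  ring

lemma prod_bfun (z : (Fin n → ℝ) × (Fin n → ℝ)) : (∏ r, bfun z r) = 1 := by
  have h1 : (∏ r, bfun z r) = Real.exp (∑ r : Fin n, (z.1 r - z.1 (r + 1)) / 2) := by
    rw [Real.exp_sum]
    rfl
  have h2 : (∑ r : Fin n, (z.1 r - z.1 (r + 1)) / 2) = 0 := by
    rw [← Finset.sum_div]
    have h3 : (∑ r : Fin n, (z.1 r - z.1 (r + 1))) = 0 := by
      rw [Finset.sum_sub_distrib]
      have h4 : (∑ r : Fin n, z.1 (r + 1)) = ∑ r : Fin n, z.1 r :=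
        Fintype.sum_equiv (Equiv.addRight (1 : Fin n)) _ _ (fun r => rfl)
      rw [h4, sub_self]
    rw [h3, zero_div]
  rw [h1, h2, Real.exp_zero]

end TodaAux

namespace TodaAux
variable {n : ℕ} [NeZero n]

lemma trace_diff (hn : 2 ≤ n) (z : (Fin n → ℝ) × (Fin n → ℝ)) (m : ℕ) (hm : m ≤ n) :
    (Lax z ^ m).trace = (LaxBar z ^ m).trace + (if m = n then 4 * (n : ℝ) else 0) := by
  have hD : (Lax z ^ m).trace - (LaxBar z ^ m).trace = (Dmat z.2 (bfun z) m).trace := by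
    rw [lax_decomp hn z, laxbar_decomp hn z]
    unfold Dmat
    rw [Matrix.trace_sub]
  by_cases hmn : m = n
  · rw [if_pos hmn]
    subst hmn
    have h4 := trace_Dn z.2 (bfun z) hn (prod_bfun z)
    linarith [hD, h4]
  · rw [if_neg hmn]
    have h0 := trace_D_small z.2 (bfun z) hn m (by omega)
    linarith [hD, h0]

end TodaAux

/-- a polynomial of degree ≤ n−1 annihilating L(z) (or L̄(z))
gives a linear relation among the differentials dF_j(z). -/
theorem stmt18 (n : ℕ) [NeZero n] (hn : 2 ≤ n) (z : (Fin n → ℝ) × (Fin n → ℝ))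
    (c : Fin n → ℝ) :
    ((∑ j : Fin n, c j • Lax z ^ (j.val) = 0) →
      ∑ j : Fin n, c j • fderiv ℝ (F (j.val + 1)) z = 0) ∧
    ((∑ j : Fin n, c j • LaxBar z ^ (j.val) = 0) →
      ∑ j : Fin n, c j • fderiv ℝ (F (j.val + 1)) z = 0) := by

  have hn2 := hn
  constructor
  · intro hyp
    apply ContinuousLinearMap.ext
    intro v
    rw [ContinuousLinearMap.sum_apply, ContinuousLinearMap.zero_apply]
    have hterm : ∀ j : Fin n, (c j • fderiv ℝ (F (j.val + 1)) z) v =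
        c j • ((Lax z ^ j.val * TodaAux.PhiL z v).trace) := by
      intro j
      rw [ContinuousLinearMap.smul_apply]
      congr 1
      have hf := TodaAux.fderiv_tracepow_apply (TodaAux.hasFDerivAt_lax z)
        (m := j.val + 1) (by omega) v
      rw [TodaAux.PhiCLM_apply] at hf
      exact hf
    rw [Finset.sum_congr rfl (fun j _ => hterm j)]
    have hsum : (∑ j : Fin n, c j • ((Lax z ^ j.val * TodaAux.PhiL z v).trace)) =
        ((∑ j : Fin n, c j • Lax z ^ j.val) * TodaAux.PhiL z v).trace := by
      rw [Matrix.sum_mul, Matrix.trace_sum]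
      exact Finset.sum_congr rfl (fun j _ => by
        rw [Matrix.smul_mul, Matrix.trace_smul])
    rw [hsum, hyp, Matrix.zero_mul, Matrix.trace_zero]
  · intro hyp
    apply ContinuousLinearMap.ext
    intro v
    rw [ContinuousLinearMap.sum_apply, ContinuousLinearMap.zero_apply]
    have hterm : ∀ j : Fin n, (c j • fderiv ℝ (F (j.val + 1)) z) v =
        c j • ((LaxBar z ^ j.val * TodaAux.PhiLbar z v).trace) := by
      intro j
      rw [ContinuousLinearMap.smul_apply]
      congr 1
      have hj := j.isLt
      have hfun : F (j.val + 1) = fun w : (Fin n → ℝ) × (Fin n → ℝ) => (1 / ((j.val + 1 : ℕ) : ℝ)) *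
          (LaxBar w ^ (j.val + 1)).trace +
          (1 / ((j.val + 1 : ℕ) : ℝ)) * (if j.val + 1 = n then 4 * (n : ℝ) else 0) := by
        funext w
        show (1 / ((j.val + 1 : ℕ) : ℝ)) * (Lax w ^ (j.val + 1)).trace = _
        rw [TodaAux.trace_diff hn w (j.val + 1) (by omega)]
        ring
      rw [hfun, fderiv_add_const]
      have hf := TodaAux.fderiv_tracepow_apply (TodaAux.hasFDerivAt_laxbar z)
        (m := j.val + 1) (by omega) v
      rw [TodaAux.PhiBarCLM_apply] at hf
      exact hf
    rw [Finset.sum_congr rfl (fun j _ => hterm j)]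
    have hsum : (∑ j : Fin n, c j • ((LaxBar z ^ j.val * TodaAux.PhiLbar z v).trace)) =
        ((∑ j : Fin n, c j • LaxBar z ^ j.val) * TodaAux.PhiLbar z v).trace := by
      rw [Matrix.sum_mul, Matrix.trace_sum]
      exact Finset.sum_congr rfl (fun j _ => by
        rw [Matrix.smul_mul, Matrix.trace_smul])
    rw [hsum, hyp, Matrix.zero_mul, Matrix.trace_zero]
end
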